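/- arXiv:1601.03241 — 6 statements merged into one kernel-verified Lean document; each statement's English description precedes it below -/
import Mathlib

section
/- Let G be a connected graph and let H be a connected spanning subgraph of G. Then tmc(G) ≥ e(G) − e(H) + tmc(H), where e(G) and e(H) denote the number of edges of G and H respectively. -/
open SimpleGraph

/-- A walk is a *total monochromatic path* (w.r.t. a vertex coloring `vcol` and an
edge coloring `ecol`) if it is a path and all its edges and internal vertices
share one common color. -/
def IsTMCPath {V : Type*} (G : SimpleGraph V) (vcol : V → ℕ) (ecol : Sym2 V → ℕ)
    {u v : V} (p : G.Walk u v) : Prop :=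
  p.IsPath ∧ ∃ c : ℕ, (∀ e ∈ p.edges, ecol e = c) ∧
    ∀ w ∈ p.support, w ≠ u → w ≠ v → vcol w = c

/-- A total coloring (vertex coloring `vcol` together with edge coloring `ecol`) is a
*TMC-coloring* if any two vertices are connected by a total monochromatic path. -/
def IsTMCColoring {V : Type*} (G : SimpleGraph V) (vcol : V → ℕ) (ecol : Sym2 V → ℕ) : Prop :=
  ∀ u v : V, ∃ p : G.Walk u v, IsTMCPath G vcol ecol p

/-- The number of colors used by a total coloring: colors on vertices together with
colors on (actual) edges of `G`. -/
noncomputable def totalColorsUsed {V : Type*} (G : SimpleGraph V)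
    (vcol : V → ℕ) (ecol : Sym2 V → ℕ) : ℕ :=
  (Set.range vcol ∪ ecol '' G.edgeSet).ncard

/-- The total monochromatic connection number `tmc G`: the maximum number of colors
used in a TMC-coloring of `G`. -/
noncomputable def tmc {V : Type*} (G : SimpleGraph V) : ℕ :=
  sSup { k | ∃ vcol ecol, IsTMCColoring G vcol ecol ∧ totalColorsUsed G vcol ecol = k }

/-- An edge coloring is an *MC-coloring* if any two vertices are connected by a
monochromatic path (all edges of one color). -/
def IsMCColoring {V : Type*} (G : SimpleGraph V) (ecol : Sym2 V → ℕ) : Prop :=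
  ∀ u v : V, ∃ p : G.Walk u v, p.IsPath ∧ ∃ c : ℕ, ∀ e ∈ p.edges, ecol e = c

/-- The monochromatic connection number `mc G`. -/
noncomputable def mc {V : Type*} (G : SimpleGraph V) : ℕ :=
  sSup { k | ∃ ecol : Sym2 V → ℕ, IsMCColoring G ecol ∧ (ecol '' G.edgeSet).ncard = k }

/-- A vertex coloring is an *MVC-coloring* if any two vertices are connected by a
vertex-monochromatic path (all internal vertices of one color). -/
def IsMVCColoring {V : Type*} (G : SimpleGraph V) (vcol : V → ℕ) : Prop :=
  ∀ u v : V, ∃ p : G.Walk u v, p.IsPath ∧ ∃ c : ℕ,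
    ∀ w ∈ p.support, w ≠ u → w ≠ v → vcol w = c

/-- The monochromatic vertex connection number `mvc G`. -/
noncomputable def mvc {V : Type*} (G : SimpleGraph V) : ℕ :=
  sSup { k | ∃ vcol : V → ℕ, IsMVCColoring G vcol ∧ (Set.range vcol).ncard = k }

/-- The number of leaves (vertices of degree one) of a graph. -/
noncomputable def leafCount {V : Type*} (G : SimpleGraph V) : ℕ :=
  {v : V | (G.neighborSet v).ncard = 1}.ncard

/-- `maxLeaves G = l(G)`: the maximum number of leaves over all spanning trees of `G`. -/
noncomputable def maxLeaves {V : Type*} (G : SimpleGraph V) : ℕ :=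
  sSup { k | ∃ T : SimpleGraph V, T ≤ G ∧ T.IsTree ∧ leafCount T = k }

lemma tmc_set_bddAbove {V : Type*} [Fintype V] (G : SimpleGraph V) :
    BddAbove { k | ∃ vcol ecol, IsTMCColoring G vcol ecol ∧ totalColorsUsed G vcol ecol = k } := by
  classical
  refine ⟨Fintype.card V + G.edgeSet.ncard, ?_⟩
  rintro k ⟨vcol, ecol, -, rfl⟩
  calc totalColorsUsed G vcol ecol
      ≤ (Set.range vcol).ncard + (ecol '' G.edgeSet).ncard := Set.ncard_union_le _ _
    _ ≤ Fintype.card V + G.edgeSet.ncard := by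
        gcongr
        · rw [← Set.image_univ]
          calc (vcol '' Set.univ).ncard ≤ (Set.univ : Set V).ncard :=
                Set.ncard_image_le Set.finite_univ
            _ = Fintype.card V := by rw [Set.ncard_univ, Nat.card_eq_fintype_card]
        · exact Set.ncard_image_le G.edgeSet.toFinite

lemma tmc_set_nonempty {V : Type*} (H : SimpleGraph V) (hH : H.Connected) :
    { k | ∃ vcol ecol, IsTMCColoring H vcol ecol ∧ totalColorsUsed H vcol ecol = k }.Nonempty := by
  classical
  refine ⟨_, fun _ => 0, fun _ => 0, fun u v => ?_, rfl⟩
  obtain ⟨p⟩ := hH.preconnected u v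
  exact ⟨p.toPath.1, p.toPath.2, 0, fun _ _ => rfl, fun _ _ _ _ => rfl⟩

/-- If `G` is a connected graph and `H` is a connected spanning subgraph of `G`,
then `tmc(G) ≥ e(G) - e(H) + tmc(H)`. -/
theorem stmt_0 {V : Type*} [Fintype V] (G H : SimpleGraph V)
    (hG : G.Connected) (hH : H.Connected) (hle : H ≤ G) :
    G.edgeSet.ncard - H.edgeSet.ncard + tmc H ≤ tmc G := by
  classical
  -- get an optimal TMC-coloring of H
  have hmem : tmc H ∈ { k | ∃ vcol ecol, IsTMCColoring H vcol ecol ∧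
      totalColorsUsed H vcol ecol = k } :=
    Nat.sSup_mem (tmc_set_nonempty H hH) (tmc_set_bddAbove H)
  obtain ⟨vcol, ecol, hTMC, hcard⟩ := hmem
  set U : Set ℕ := Set.range vcol ∪ ecol '' H.edgeSet with hU
  have hUfin : U.Finite := (Set.finite_range vcol).union (H.edgeSet.toFinite.image _)
  set b : ℕ := sSup U + 1 with hb
  have hUlt : ∀ c ∈ U, c < b := fun c hc =>
    Nat.lt_succ_of_le (le_csSup hUfin.bddAbove hc)
  obtain ⟨g, hg⟩ : ∃ g : Sym2 V → ℕ, Function.Injective g := exists_injective_nat _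
  set S : Set (Sym2 V) := G.edgeSet \ H.edgeSet with hS
  set ecol' : Sym2 V → ℕ := fun e => if e ∈ H.edgeSet then ecol e else b + g e with hec
  have hedge : H.edgeSet ⊆ G.edgeSet := edgeSet_mono hle
  -- the new coloring is a TMC-coloring of G
  have hTMC' : IsTMCColoring G vcol ecol' := by
    intro u v
    obtain ⟨p, hp, c, hce, hcv⟩ := hTMC u v
    have hpe : ∀ e ∈ p.edges, e ∈ G.edgeSet := fun e he =>
      hedge (p.edges_subset_edgeSet he)
    refine ⟨p.transfer G hpe, hp.transfer hpe, c, ?_, ?_⟩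
    · intro e he
      rw [Walk.edges_transfer] at he
      have heH : e ∈ H.edgeSet := p.edges_subset_edgeSet he
      simp only [hec, if_pos heH]
      exact hce e he
    · intro w hw
      rw [Walk.support_transfer] at hw
      exact hcv w hw
  -- count colors
  have himg : ecol' '' G.edgeSet = ecol '' H.edgeSet ∪ (fun e => b + g e) '' S := by
    have : G.edgeSet = H.edgeSet ∪ S := by
      rw [hS, Set.union_diff_cancel hedge]
    rw [this, Set.image_union]
    congr 1
    · exact Set.image_congr fun e he => by simp [hec, if_pos he]
    · exact Set.image_congr fun e he => by simp [hec, if_neg he.2]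
  have hUnion : Set.range vcol ∪ ecol' '' G.edgeSet = U ∪ (fun e => b + g e) '' S := by
    rw [himg, hU, Set.union_assoc]
  have hdisj : Disjoint U ((fun e => b + g e) '' S) := by
    rw [Set.disjoint_right]
    rintro x ⟨e, -, rfl⟩ hx
    have h2 : b + g e ∈ U := hx
    have := hUlt _ h2
    omega
  have hSfin : S.Finite := G.edgeSet.toFinite.diff
  have hinj : Function.Injective (fun e : Sym2 V => b + g e) := by
    intro x y h
    have h' : b + g x = b + g y := h
    exact hg (by omega)
  have hcount : totalColorsUsed G vcol ecol' = tmc H + S.ncard := by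
    rw [totalColorsUsed, hUnion, Set.ncard_union_eq hdisj hUfin (hSfin.image _),
      Set.ncard_image_of_injective _ hinj]
    rw [totalColorsUsed, ← hU] at hcard
    rw [hcard]
  have hScard : S.ncard = G.edgeSet.ncard - H.edgeSet.ncard :=
    Set.ncard_diff hedge
  have : tmc H + S.ncard ≤ tmc G := by
    apply le_csSup (tmc_set_bddAbove G)
    exact ⟨vcol, ecol', hTMC', hcount⟩
  omega
end

section
/- If T is a tree, then tmc(T) = l(T) + 1, where l(T) is the number of leaves (vertices of degree one) of T. -/
open SimpleGraph

section TMCAux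
variable {V : Type*} {T : SimpleGraph V}

private lemma internal_two_neighbors {G : SimpleGraph V} :
    ∀ {u v : V} (p : G.Walk u v), p.IsPath → ∀ w ∈ p.support, w ≠ u → w ≠ v →
      ∃ a b, a ≠ b ∧ G.Adj w a ∧ G.Adj w b := by
  intro u v p
  induction p with
  | nil =>
    intro hp w hw hwu _
    simp only [Walk.support_nil, List.mem_singleton] at hw
    exact absurd hw hwu
  | @cons u x v h p ih =>
    intro hp w hw hwu hwv
    rw [Walk.cons_isPath_iff] at hp
    rw [Walk.support_cons, List.mem_cons] at hw
    rcases hw with rfl | hw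
    · exact absurd rfl hwu
    · by_cases hwx : w = x
      · subst hwx
        cases p with
        | nil => exact absurd rfl hwv
        | @cons _ y _ h2 q =>
          refine ⟨u, y, ?_, h.symm, h2⟩
          intro huy
          exact hp.2 (by rw [huy]; simp)
      · exact ih hp.1 w hw hwx hwv

private lemma edge_mem_of_adj [DecidableEq V] (hT : T.IsAcyclic)
    {z v w : V} (R : T.Walk z v) (hR : R.IsPath) (hzw : T.Adj z w) (hw : w ∈ R.support) :
    s(z,w) ∈ R.edges := by
  have h1 : (R.takeUntil w hw).IsPath := hR.takeUntil hw
  have h2 : (Walk.cons hzw Walk.nil : T.Walk z w).IsPath := by simp [hzw.ne]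
  have h3 := hT.path_unique ⟨R.takeUntil w hw, h1⟩ ⟨Walk.cons hzw Walk.nil, h2⟩
  have h4 : R.takeUntil w hw = Walk.cons hzw Walk.nil := congrArg Subtype.val h3
  have : s(z,w) ∈ (R.takeUntil w hw).edges := by rw [h4]; simp
  exact R.edges_takeUntil_subset hw this

private lemma path_TM (hT : T.IsAcyclic) {vcol : V → ℕ} {ecol : Sym2 V → ℕ}
    (h : IsTMCColoring T vcol ecol)
    {u v : V} (p : T.Walk u v) (hp : p.IsPath) :
    ∃ c, (∀ e ∈ p.edges, ecol e = c) ∧ ∀ w ∈ p.support, w ≠ u → w ≠ v → vcol w = c := by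
  obtain ⟨q, hq, c, h1, h2⟩ := h u v
  have h3 : p = q := congrArg Subtype.val (hT.path_unique ⟨p, hp⟩ ⟨q, hq⟩)
  subst h3
  exact ⟨c, h1, h2⟩

private lemma exists_path_with_edge [DecidableEq V] (hT : T.IsAcyclic) (hc : T.Connected)
    {x y : V} (hxy : T.Adj x y) (z : V) :
    ∃ (u : V) (Q : T.Walk u z), Q.IsPath ∧ s(x,y) ∈ Q.edges := by
  obtain ⟨P, hP⟩ : ∃ P : T.Walk x z, P.IsPath :=
    ⟨((hc.preconnected x z).some).toPath, ((hc.preconnected x z).some).toPath.2⟩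
  by_cases hy : y ∈ P.support
  · exact ⟨x, P, hP, edge_mem_of_adj hT P hP hxy hy⟩
  · refine ⟨y, Walk.cons hxy.symm P, ?_, ?_⟩
    · rw [Walk.cons_isPath_iff]; exact ⟨hP, hy⟩
    · simp [Sym2.eq_swap]

private lemma exists_path_with_two_edges [DecidableEq V] (hT : T.IsAcyclic) (hc : T.Connected)
    {x y z w : V} (hxy : T.Adj x y) (hzw : T.Adj z w) :
    ∃ (a b : V) (R : T.Walk a b), R.IsPath ∧ s(x,y) ∈ R.edges ∧ s(z,w) ∈ R.edges := by
  obtain ⟨u, Q, hQ, he⟩ := exists_path_with_edge hT hc hxy z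
  by_cases hw : w ∈ Q.support
  · have h1 : s(z,w) ∈ Q.reverse.edges := by
      refine edge_mem_of_adj hT Q.reverse hQ.reverse hzw ?_
      rw [Walk.support_reverse]; simpa using hw
    rw [Walk.edges_reverse, List.mem_reverse] at h1
    exact ⟨u, z, Q, hQ, he, h1⟩
  · refine ⟨w, u, Walk.cons hzw.symm Q.reverse, ?_, ?_, ?_⟩
    · rw [Walk.cons_isPath_iff, Walk.support_reverse]
      exact ⟨hQ.reverse, by simpa using hw⟩
    · rw [Walk.edges_cons, List.mem_cons]
      right; rw [Walk.edges_reverse, List.mem_reverse]; exact he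
    · rw [Walk.edges_cons, Sym2.eq_swap]; exact List.mem_cons_self

private lemma exists_adj' (hc : T.Connected) (h : Nontrivial V) : ∃ a b, T.Adj a b := by
  obtain ⟨u, v, huv⟩ := h.exists_pair_ne
  obtain ⟨p⟩ := hc.preconnected u v
  cases p with
  | nil => exact absurd rfl huv
  | cons h q => exact ⟨_, _, h⟩

private lemma exists_neighbor (hc : T.Connected) (h : Nontrivial V) (v : V) :
    (T.neighborSet v).Nonempty := by
  obtain ⟨u, hu⟩ := exists_ne v
  obtain ⟨p⟩ := hc.preconnected v u
  cases p with
  | nil => exact absurd rfl hu.symm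
  | cons h q => exact ⟨_, h⟩

private lemma tmc_upper [Fintype V] (hT : T.IsTree)
    {vcol : V → ℕ} {ecol : Sym2 V → ℕ} (h : IsTMCColoring T vcol ecol) :
    totalColorsUsed T vcol ecol ≤ leafCount T + 1 := by
  classical
  have hc := hT.isConnected
  have hac := hT.IsAcyclic
  rcases subsingleton_or_nontrivial V with hV | hV
  · obtain ⟨v0⟩ := hc.nonempty
    have hE : T.edgeSet = ∅ := by
      ext e
      induction e with
      | _ a b => simp only [mem_edgeSet, Set.mem_empty_iff_false, iff_false]
                 intro hab; exact hab.ne (Subsingleton.elim _ _)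
    have hr : Set.range vcol ⊆ {vcol v0} := by
      rintro c ⟨v, rfl⟩; simp [Subsingleton.elim v v0]
    unfold totalColorsUsed
    rw [hE, Set.image_empty, Set.union_empty]
    calc (Set.range vcol).ncard ≤ ({vcol v0} : Set ℕ).ncard :=
          Set.ncard_le_ncard hr (Set.finite_singleton _)
      _ = 1 := Set.ncard_singleton _
      _ ≤ leafCount T + 1 := by omega
  · obtain ⟨a, b, hab⟩ := exists_adj' hc hV
    set c0 := ecol s(a,b) with hc0
    have hedges : ∀ e ∈ T.edgeSet, ecol e = c0 := by
      intro e he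
      induction e with
      | _ z w =>
        rw [mem_edgeSet] at he
        obtain ⟨a', b', R, hR, h1, h2⟩ := exists_path_with_two_edges hac hc hab he
        obtain ⟨c, hce, _⟩ := path_TM hac h R hR
        rw [hce _ h2, hc0, hce _ h1]
    have hvert : ∀ v : V, (T.neighborSet v).ncard ≠ 1 → vcol v = c0 := by
      intro v hv
      have hne : (T.neighborSet v).Nonempty := exists_neighbor hc hV v
      have hfin : (T.neighborSet v).Finite := Set.toFinite _
      have h1 : 0 < (T.neighborSet v).ncard := (Set.ncard_pos hfin).mpr hne
      have h2 : 1 < (T.neighborSet v).ncard := by omega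
      obtain ⟨x, hx, y, hy, hxy⟩ := (Set.one_lt_ncard hfin).mp h2
      rw [mem_neighborSet] at hx hy
      have hP : (Walk.cons hx.symm (Walk.cons hy Walk.nil) : T.Walk x y).IsPath := by
        rw [Walk.cons_isPath_iff]
        constructor
        · rw [Walk.cons_isPath_iff]; simp [hy.ne]
        · simp [hx.ne', hxy]
      obtain ⟨c, hce, hcv⟩ := path_TM hac h _ hP
      have hv1 : vcol v = c := by
        exact hcv v (by simp) hx.ne hy.ne
      have hv2 : ecol s(x,v) = c := hce _ (by simp)
      rw [hv1, ← hv2]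
      exact hedges _ (by rw [mem_edgeSet]; exact hx.symm)
    have hsub : Set.range vcol ∪ ecol '' T.edgeSet ⊆
        insert c0 (vcol '' {v : V | (T.neighborSet v).ncard = 1}) := by
      rintro c (⟨v, rfl⟩ | ⟨e, he, rfl⟩)
      · by_cases hv : (T.neighborSet v).ncard = 1
        · exact Set.mem_insert_of_mem _ ⟨v, hv, rfl⟩
        · rw [hvert v hv]; exact Set.mem_insert _ _
      · rw [hedges e he]; exact Set.mem_insert _ _
    unfold totalColorsUsed leafCount
    calc (Set.range vcol ∪ ecol '' T.edgeSet).ncard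
        ≤ (insert c0 (vcol '' {v : V | (T.neighborSet v).ncard = 1})).ncard :=
          Set.ncard_le_ncard hsub (Set.toFinite _)
      _ ≤ (vcol '' {v : V | (T.neighborSet v).ncard = 1}).ncard + 1 :=
          Set.ncard_insert_le _ _
      _ ≤ {v : V | (T.neighborSet v).ncard = 1}.ncard + 1 := by
          have := Set.ncard_image_le (s := {v : V | (T.neighborSet v).ncard = 1})
            (f := vcol) (Set.toFinite _)
          omega

private lemma tmc_lower [Fintype V] (hT : T.IsTree) :
    ∃ vcol ecol, IsTMCColoring T vcol ecol ∧
      totalColorsUsed T vcol ecol = leafCount T + 1 := by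
  classical
  have hc := hT.isConnected
  set f : V → ℕ := fun v => ((Fintype.equivFin V) v : ℕ) with hf_def
  have hf : Function.Injective f := fun a b hab =>
    (Fintype.equivFin V).injective (Fin.val_injective hab)
  set L := {v : V | (T.neighborSet v).ncard = 1} with hL
  set vcol : V → ℕ := fun v => if v ∈ L then f v + 1 else 0 with hvcol
  refine ⟨vcol, fun _ => 0, ?_, ?_⟩
  · intro u v
    obtain ⟨p0⟩ := hc.preconnected u v
    refine ⟨p0.toPath.1, p0.toPath.2, 0, fun e _ => rfl, ?_⟩
    intro w hw hwu hwv
    obtain ⟨x, y, hxy, hx, hy⟩ := internal_two_neighbors _ p0.toPath.2 w hw hwu hwv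
    have hwL : w ∉ L := by
      intro hwL
      obtain ⟨t, ht⟩ := Set.ncard_eq_one.mp hwL
      have h1 : x ∈ T.neighborSet w := hx
      have h2 : y ∈ T.neighborSet w := hy
      rw [ht, Set.mem_singleton_iff] at h1 h2
      exact hxy (h1.trans h2.symm)
    simp [hvcol, hwL]
  · have key : Set.range vcol ∪ (fun _ => (0:ℕ)) '' T.edgeSet
        = insert 0 ((fun v => f v + 1) '' L) := by
      apply Set.Subset.antisymm
      · rintro c (⟨v, rfl⟩ | ⟨e, _, rfl⟩)
        · by_cases hv : v ∈ L
          · exact Set.mem_insert_of_mem _ ⟨v, hv, by simp [hvcol, hv]⟩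
          · simp only [hvcol, hv, if_false]; exact Set.mem_insert _ _
        · exact Set.mem_insert _ _
      · rintro c (rfl | ⟨v, hv, rfl⟩)
        · rcases subsingleton_or_nontrivial V with hV | hV
          · left
            obtain ⟨v0⟩ := hc.nonempty
            have hv0 : v0 ∉ L := by
              intro hv0
              obtain ⟨t, ht⟩ := Set.ncard_eq_one.mp hv0
              have h1 : t ∈ T.neighborSet v0 := by rw [ht]; rfl
              exact (T.ne_of_adj h1.symm) (Subsingleton.elim _ _)
            exact ⟨v0, by simp [hvcol, hv0]⟩
          · right
            obtain ⟨x, y, hxy⟩ := exists_adj' hc hV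
            exact ⟨s(x,y), hxy, rfl⟩
        · exact Or.inl ⟨v, by simp [hvcol, hv]⟩
    unfold totalColorsUsed leafCount
    rw [key]
    rw [Set.ncard_insert_of_notMem (by rintro ⟨v, -, hv⟩; simp at hv) (Set.toFinite _)]
    rw [Set.ncard_image_of_injOn (fun a _ b _ hab => hf (Nat.succ_injective hab))]

end TMCAux

/-- If `T` is a tree, then `tmc(T) = l(T) + 1`. -/
theorem stmt_1 {V : Type*} [Fintype V] (T : SimpleGraph V) (hT : T.IsTree) :
    tmc T = leafCount T + 1 := by
  classical
  have hupper : ∀ k ∈ {k | ∃ vcol ecol, IsTMCColoring T vcol ecol ∧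
      totalColorsUsed T vcol ecol = k}, k ≤ leafCount T + 1 := by
    rintro k ⟨vcol, ecol, h, rfl⟩
    exact tmc_upper hT h
  have hmem : leafCount T + 1 ∈ {k | ∃ vcol ecol, IsTMCColoring T vcol ecol ∧
      totalColorsUsed T vcol ecol = k} := by
    obtain ⟨vcol, ecol, h1, h2⟩ := tmc_lower hT
    exact ⟨vcol, ecol, h1, h2⟩
  exact le_antisymm (csSup_le ⟨_, hmem⟩ hupper) (le_csSup ⟨_, hupper⟩ hmem)
end

section
/- For every connected graph G with n vertices and m edges, tmc(G) ≥ m − n + 2 + l(G). -/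
open SimpleGraph

lemma reachable_delete_aux {V : Type*} {G : SimpleGraph V} {a b : V}
    (hab : (G \ fromEdgeSet {s(a,b)}).Reachable a b) {x y : V} (p : G.Walk x y) :
    (G \ fromEdgeSet {s(a,b)}).Reachable x y := by
  induction p with
  | nil => exact Reachable.refl _
  | @cons u v w h q ih =>
    refine Reachable.trans ?_ ih
    by_cases he : s(u,v) = s(a,b)
    · rw [Sym2.eq_iff] at he
      rcases he with ⟨rfl, rfl⟩ | ⟨rfl, rfl⟩
      · exact hab
      · exact hab.symm
    · exact Adj.reachable (by simp [sdiff_adj, fromEdgeSet_adj, h, he])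

lemma exists_spanning_tree_aux {V : Type*} [Fintype V] :
    ∀ n (G : SimpleGraph V), G.edgeSet.ncard ≤ n → G.Connected → ∃ T ≤ G, T.IsTree := by
  intro n
  induction n with
  | zero =>
    intro G hcard hG
    refine ⟨G, le_refl _, hG, ?_⟩
    intro v c hc
    have : c.edges ≠ [] := by
      intro h
      have h3 := hc.three_le_length
      have h2 : c.edges.length = c.length := c.length_edges
      rw [h] at h2
      simp at h2
      omega
    obtain ⟨e, he⟩ := List.exists_mem_of_ne_nil _ this
    have heG : e ∈ G.edgeSet := Walk.edges_subset_edgeSet c he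
    have hfin : G.edgeSet.Finite := Set.toFinite _
    have : G.edgeSet = ∅ := by
      have := Nat.le_zero.mp hcard
      rwa [Set.ncard_eq_zero hfin] at this
    simp [this] at heG
  | succ n ih =>
    intro G hcard hG
    by_cases hac : G.IsAcyclic
    · exact ⟨G, le_refl _, hG, hac⟩
    · simp only [IsAcyclic, not_forall, not_not] at hac
      obtain ⟨v, c, hc⟩ := hac
      have hne : c.edges ≠ [] := by
        intro h
        have h3 := hc.three_le_length
        have h2 : c.edges.length = c.length := c.length_edges
        rw [h] at h2
        simp at h2
        omega
      obtain ⟨e, he⟩ := List.exists_mem_of_ne_nil _ hne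
      induction e using Sym2.ind with
      | _ a b =>
      have heG : s(a,b) ∈ G.edgeSet := Walk.edges_subset_edgeSet c he
      have hadj : G.Adj a b := heG
      have hnb : ¬ G.IsBridge s(a,b) := by
        rw [isBridge_iff_adj_and_forall_cycle_notMem]
        push_neg
        exact ⟨v, c, hc, he⟩
        exact heG
      rw [isBridge_iff] at hnb
      push_neg at hnb
      have hreach : (G \ fromEdgeSet {s(a,b)}).Reachable a b := hnb
      set G' := G \ fromEdgeSet {s(a,b)} with hG'
      have hle : G' ≤ G := sdiff_le
      have hG'conn : G'.Connected := by
        have := hG.nonempty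
        refine Connected.mk fun x y => ?_
        exact reachable_delete_aux hreach (hG.preconnected x y).some
      have hedge : G'.edgeSet = G.edgeSet \ {s(a,b)} := by
        simp [hG', edgeSet_sdiff, edgeSet_fromEdgeSet, edgeSet_sdiff_sdiff_isDiag]
      have hlt : G'.edgeSet.ncard ≤ n := by
        have hfin : G.edgeSet.Finite := Set.toFinite _
        have : G'.edgeSet.ncard = G.edgeSet.ncard - 1 := by
          rw [hedge, Set.ncard_diff_singleton_of_mem heG]
        have hpos : 0 < G.edgeSet.ncard := by
          rw [Set.ncard_pos hfin]; exact ⟨_, heG⟩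
        omega
      obtain ⟨T, hT, hTt⟩ := ih G' hlt hG'conn
      exact ⟨T, hT.trans hle, hTt⟩

lemma exists_spanning_tree {V : Type*} [Fintype V] (G : SimpleGraph V) (hG : G.Connected) :
    ∃ T ≤ G, T.IsTree :=
  exists_spanning_tree_aux G.edgeSet.ncard G le_rfl hG


lemma getVert_mem_support' {V : Type*} {G : SimpleGraph V} {u v : V}
    (p : G.Walk u v) (n : ℕ) : p.getVert n ∈ p.support := by
  induction p generalizing n with
  | nil => simp [Walk.getVert]
  | cons h q ih =>
    cases n with
    | zero => simp [Walk.getVert]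
    | succ n => simp only [Walk.getVert, Walk.support_cons, List.mem_cons]; exact Or.inr (ih n)

lemma internal_two_neighbors_s2 {V : Type*} {T : SimpleGraph V} {u v w : V}
    {p : T.Walk u v} (hp : p.IsPath) (hw : w ∈ p.support) (hwu : w ≠ u) (hwv : w ≠ v) :
    ∃ x y, x ≠ y ∧ T.Adj w x ∧ T.Adj w y := by
  classical
  set q := p.takeUntil w hw with hqdef
  set r := p.dropUntil w hw with hrdef
  have hspec : q.append r = p := p.take_spec hw
  have hqlen : 0 < q.length := by
    rw [← Walk.not_nil_iff_lt_length]
    exact fun hn => hwu (hn.eq.symm) |>.elim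
  have hrlen : 0 < r.length := by
    rw [← Walk.not_nil_iff_lt_length]
    exact fun hn => hwv hn.eq |>.elim
  refine ⟨q.reverse.getVert 1, r.getVert 1, ?_, ?_, ?_⟩
  · -- distinctness
    intro hxy
    have hx : q.reverse.getVert 1 ∈ q.support := by
      have := getVert_mem_support' q.reverse 1
      rwa [Walk.support_reverse, List.mem_reverse] at this
    have hy : r.getVert 1 ∈ r.support.tail := by
      have hmem := getVert_mem_support' r 1
      have hadj : T.Adj (r.getVert 0) (r.getVert 1) := r.adj_getVert_succ hrlen
      rw [Walk.getVert_zero] at hadj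
      have hne : r.getVert 1 ≠ w := hadj.ne'
      rw [r.support_eq_cons, List.mem_cons] at hmem
      rcases hmem with h | h
      · exact absurd h hne
      · exact h
    have hnd : p.support.Nodup := hp.support_nodup
    rw [← hspec, Walk.support_append] at hnd
    have hdisj := List.disjoint_of_nodup_append hnd
    exact hdisj hx (hxy ▸ hy)
  · have : T.Adj (q.reverse.getVert 0) (q.reverse.getVert 1) :=
      q.reverse.adj_getVert_succ (by rwa [Walk.length_reverse])
    rwa [Walk.getVert_zero] at this
  · have : T.Adj (r.getVert 0) (r.getVert 1) := r.adj_getVert_succ hrlen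
    rwa [Walk.getVert_zero] at this

/-- For every connected graph `G` with `n` vertices and `m` edges,
`tmc(G) ≥ m - n + 2 + l(G)`. -/
theorem stmt_2 {V : Type*} [Fintype V] (G : SimpleGraph V) (hG : G.Connected) :
    (G.edgeSet.ncard : ℤ) - Fintype.card V + 2 + maxLeaves G ≤ tmc G := by
  classical
  have hne : Nonempty V := hG.nonempty
  -- obtain a spanning tree with the maximum number of leaves
  obtain ⟨T₀, hle₀, hT₀⟩ := exists_spanning_tree G hG
  have hSne : {k | ∃ T : SimpleGraph V, T ≤ G ∧ T.IsTree ∧ leafCount T = k}.Nonempty :=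
    ⟨leafCount T₀, T₀, hle₀, hT₀, rfl⟩
  have hSbdd : BddAbove {k | ∃ T : SimpleGraph V, T ≤ G ∧ T.IsTree ∧ leafCount T = k} := by
    refine ⟨Fintype.card V, fun k hk => ?_⟩
    obtain ⟨T, -, -, rfl⟩ := hk
    calc leafCount T ≤ (Set.univ : Set V).ncard :=
          Set.ncard_le_ncard (Set.subset_univ _) Set.finite_univ
      _ = Fintype.card V := by rw [Set.ncard_univ, Nat.card_eq_fintype_card]
  obtain ⟨T, hle, hT, hleaf⟩ : maxLeaves G ∈
      {k | ∃ T : SimpleGraph V, T ≤ G ∧ T.IsTree ∧ leafCount T = k} :=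
    Nat.sSup_mem hSne hSbdd
  -- injections to ℕ
  obtain ⟨idxE, hidxE⟩ := exists_injective_nat (Sym2 V)
  obtain ⟨idxV, hidxV⟩ := exists_injective_nat V
  set L : Set V := {v | (T.neighborSet v).ncard = 1} with hLdef
  set vcol : V → ℕ := fun v => if v ∈ L then 3 * idxV v + 2 else 0 with hvcol
  set ecol : Sym2 V → ℕ := fun e => if e ∈ T.edgeSet then 0 else 3 * idxE e + 1 with hecol
  -- the coloring is a TMC coloring
  have htmc : IsTMCColoring G vcol ecol := by
    intro u v
    obtain ⟨p0, hp0, -⟩ := hT.existsUnique_path u v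
    refine ⟨p0.mapLe hle, hp0.mapLe hle, 0, ?_, ?_⟩
    · intro e he
      have hid : ⇑(Hom.ofLE hle) = id := rfl
      have hedges : (p0.mapLe hle).edges = p0.edges := by
        simp [Walk.mapLe, Walk.edges_map, hid, Sym2.map_id, List.map_id]
      rw [hedges] at he
      have : e ∈ T.edgeSet := p0.edges_subset_edgeSet he
      simp [hecol, this]
    · intro w hw hwu hwv
      have hid : ⇑(Hom.ofLE hle) = id := rfl
      have hsupp : (p0.mapLe hle).support = p0.support := by
        simp [Walk.mapLe, Walk.support_map, hid, List.map_id]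
      rw [hsupp] at hw
      obtain ⟨x, y, hxy, hx, hy⟩ := internal_two_neighbors_s2 hp0 hw hwu hwv
      have hnotL : w ∉ L := by
        intro hwL
        have hsub : ({x, y} : Set V) ⊆ T.neighborSet w := by
          rintro z (rfl | rfl)
          · exact hx
          · exact hy
        have h2 : ({x, y} : Set V).ncard = 2 := Set.ncard_pair hxy
        have := Set.ncard_le_ncard hsub (Set.toFinite _)
        rw [h2, hLdef] at *
        simp only [Set.mem_setOf_eq] at hwL
        omega
      simp [hvcol, hnotL]
  -- counting
  set D : Set (Sym2 V) := G.edgeSet \ T.edgeSet with hDdef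
  set A : Set ℕ := (fun e => 3 * idxE e + 1) '' D with hAdef
  set B : Set ℕ := (fun v => 3 * idxV v + 2) '' L with hBdef
  set U : Set ℕ := Set.range vcol ∪ ecol '' G.edgeSet with hUdef
  have hsub : {0} ∪ A ∪ B ⊆ U := by
    rintro c ((rfl | ⟨e, ⟨heG, heT⟩, rfl⟩) | ⟨v, hv, rfl⟩)
    · -- 0 is used
      obtain ⟨u⟩ := hne
      by_cases hu : u ∈ L
      · have hpos : (T.neighborSet u).Nonempty := by
          rw [← Set.ncard_pos (Set.toFinite _)]
          have : (T.neighborSet u).ncard = 1 := hu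
          omega
        obtain ⟨x, hx⟩ := hpos
        have hxT : s(u, x) ∈ T.edgeSet := hx
        refine Or.inr ⟨s(u, x), edgeSet_mono hle hxT, ?_⟩
        simp [hecol, hxT]
      · exact Or.inl ⟨u, by simp [hvcol, hu]⟩
    · exact Or.inr ⟨e, heG, by simp [hecol, heT]⟩
    · exact Or.inl ⟨v, by simp [hvcol, hv]⟩
  have hUfin : U.Finite := (Set.finite_range vcol).union ((Set.toFinite G.edgeSet).image ecol)
  have hA : A.ncard = D.ncard :=
    Set.ncard_image_of_injective _ (fun a b h => hidxE (by omega))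
  have hB : B.ncard = L.ncard :=
    Set.ncard_image_of_injective _ (fun a b h => hidxV (by omega))
  have hdisjAB : Disjoint A B := by
    rw [Set.disjoint_left]
    rintro c ⟨e, -, he⟩ ⟨v, -, hv⟩
    simp only at he hv
    omega
  have hdisj0 : Disjoint ({0} : Set ℕ) A := by
    rw [Set.disjoint_left]
    rintro c rfl ⟨e, -, h⟩
    simp only at h
    omega
  have hdisj0' : Disjoint ({0} ∪ A : Set ℕ) B := by
    rw [Set.disjoint_left]
    rintro c (rfl | ⟨e, -, he⟩) ⟨v, -, hv⟩
    · simp only at hv; omega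
    · simp only at he hv; omega
  have hcard : ({0} ∪ A ∪ B).ncard = 1 + D.ncard + L.ncard := by
    rw [Set.ncard_union_eq hdisj0' (Set.Finite.union (Set.finite_singleton 0)
        ((Set.toFinite D).image _)) ((Set.toFinite L).image _),
      Set.ncard_union_eq hdisj0 (Set.finite_singleton 0) ((Set.toFinite D).image _),
      Set.ncard_singleton, hA, hB]
  have hUcard : 1 + D.ncard + L.ncard ≤ U.ncard := by
    rw [← hcard]; exact Set.ncard_le_ncard hsub hUfin
  -- edge counts
  have hTsub : T.edgeSet ⊆ G.edgeSet := edgeSet_subset_edgeSet.mpr hle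
  have hDcard : D.ncard = G.edgeSet.ncard - T.edgeSet.ncard :=
    Set.ncard_diff hTsub (Set.toFinite _)
  have hTn : T.edgeSet.ncard + 1 = Fintype.card V := by
    have h1 := hT.card_edgeFinset
    have h2 : T.edgeSet.ncard = T.edgeFinset.card := by
      rw [Set.ncard_eq_toFinset_card']; congr 1
    omega
  have hmn : T.edgeSet.ncard ≤ G.edgeSet.ncard := Set.ncard_le_ncard hTsub (Set.toFinite _)
  -- tmc bound
  have hbdd : BddAbove {k | ∃ vcol ecol, IsTMCColoring G vcol ecol ∧
      totalColorsUsed G vcol ecol = k} := by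
    refine ⟨Fintype.card V + G.edgeSet.ncard, fun k hk => ?_⟩
    obtain ⟨vc, ec, -, rfl⟩ := hk
    calc totalColorsUsed G vc ec
        ≤ (Set.range vc).ncard + (ec '' G.edgeSet).ncard := Set.ncard_union_le _ _
      _ ≤ Fintype.card V + G.edgeSet.ncard := by
          gcongr
          · calc (Set.range vc).ncard = (vc '' Set.univ).ncard := by rw [Set.image_univ]
              _ ≤ (Set.univ : Set V).ncard := Set.ncard_image_le Set.finite_univ
              _ = Fintype.card V := by rw [Set.ncard_univ, Nat.card_eq_fintype_card]
          · exact Set.ncard_image_le (Set.toFinite _)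
  have hmem : totalColorsUsed G vcol ecol ∈ {k | ∃ vcol ecol, IsTMCColoring G vcol ecol ∧
      totalColorsUsed G vcol ecol = k} := ⟨vcol, ecol, htmc, rfl⟩
  have htle : totalColorsUsed G vcol ecol ≤ tmc G := le_csSup hbdd hmem
  have hUeq : totalColorsUsed G vcol ecol = U.ncard := rfl
  have hLeq : L.ncard = maxLeaves G := hleaf
  omega
end

section
/- In any extremal TMC-coloring of a connected graph G, for every color c that is used on at least one edge, the subgraph of G formed by the edges colored c is a tree, and every internal (non-leaf) vertex of this tree is colored c. -/
open SimpleGraph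

/-- The subgraph of `G` formed by the edges colored `c` (together with their
endpoints as vertices). -/
def colorSubgraph {V : Type*} (G : SimpleGraph V) (ecol : Sym2 V → ℕ) (c : ℕ) :
    G.Subgraph where
  verts := {v | ∃ e ∈ G.edgeSet, ecol e = c ∧ v ∈ e}
  Adj a b := G.Adj a b ∧ ecol s(a, b) = c
  adj_sub h := h.1
  edge_vert {a b} h := ⟨s(a, b), h.1, h.2, Sym2.mem_mk_left a b⟩
  symm := ⟨fun a b h => ⟨h.1.symm, by rw [Sym2.eq_swap]; exact h.2⟩⟩

lemma colorSubgraph_verts_iff {V : Type*} {G : SimpleGraph V} {ecol : Sym2 V → ℕ} {c : ℕ}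
    {v : V} : v ∈ (colorSubgraph G ecol c).verts ↔ ∃ e ∈ G.edgeSet, ecol e = c ∧ v ∈ e :=
  Iff.rfl

lemma colorSubgraph_adj_iff {V : Type*} {G : SimpleGraph V} {ecol : Sym2 V → ℕ} {c : ℕ}
    {a b : V} : (colorSubgraph G ecol c).Adj a b ↔ G.Adj a b ∧ ecol s(a, b) = c :=
  Iff.rfl

section Aux

variable {V : Type*} (G : SimpleGraph V)

/-- A path of length ≤ 1 is a TMC path for any coloring. -/
lemma short_isTMCPath (vc : V → ℕ) (ec : Sym2 V → ℕ) {u w : V} (P : G.Walk u w)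
    (hP : P.IsPath) (hl : P.length ≤ 1) : IsTMCPath G vc ec P := by
  refine ⟨hP, ?_⟩
  cases P with
  | nil => exact ⟨0, by simp, by intro x hx hxu _; simp at hx; exact absurd hx hxu⟩
  | cons h p =>
    cases p with
    | nil =>
      refine ⟨ec s(u, w), by simp, ?_⟩
      intro x hx hxu hxw
      simp [SimpleGraph.Walk.support_cons] at hx
      rcases hx with h1 | h1 <;> [exact absurd h1 hxu; exact absurd h1 hxw]
    | cons h' p' => simp [SimpleGraph.Walk.length_cons] at hl

/-- Any vertex of a walk other than the start is incident to some edge of the walk. -/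
lemma mem_edge_of_mem_support_ne_start {u w : V} (P : G.Walk u w) {x : V}
    (hx : x ∈ P.support) (hxu : x ≠ u) : ∃ e ∈ P.edges, x ∈ e := by
  induction P with
  | nil => simp at hx; exact absurd hx hxu
  | @cons a b d h p ih =>
    rw [SimpleGraph.Walk.support_cons] at hx
    rcases List.mem_cons.mp hx with h1 | h1
    · exact absurd h1 hxu
    · by_cases hxb : x = b
      · subst hxb
        exact ⟨s(a, x), by simp, Sym2.mem_mk_right _ _⟩
      · obtain ⟨e, he, hxe⟩ := ih h1 hxb
        exact ⟨e, by simp [he], hxe⟩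

/-- Any edge of a path of length ≥ 2 has an endpoint which is an interior vertex. -/
lemma exists_interior_endpoint {u w : V} (P : G.Walk u w) (hP : P.IsPath)
    (hl : 2 ≤ P.length) {e : Sym2 V} (he : e ∈ P.edges) :
    ∃ x, x ∈ P.support ∧ x ≠ u ∧ x ≠ w ∧ x ∈ e := by
  cases P with
  | nil => simp at he
  | @cons _ b _ h p =>
    rw [SimpleGraph.Walk.edges_cons] at he
    rcases List.mem_cons.mp he with h1 | h1
    · subst h1
      refine ⟨b, by simp, fun hba => h.ne' hba, ?_, Sym2.mem_mk_right _ _⟩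
      intro hbw
      subst hbw
      cases p with
      | nil => simp [SimpleGraph.Walk.length_cons] at hl
      | @cons _ b' _ h' p' =>
        have hp1 := (SimpleGraph.Walk.cons_isPath_iff h _).mp hP
        have hp2 := (SimpleGraph.Walk.cons_isPath_iff h' p').mp hp1.1
        exact hp2.2 (SimpleGraph.Walk.end_mem_support p')
    · have hnd : ¬ e.IsDiag := SimpleGraph.not_isDiag_of_mem_edgeSet G
        (SimpleGraph.Walk.edges_subset_edgeSet p h1)
      have hu : u ∉ p.support := ((SimpleGraph.Walk.cons_isPath_iff h p).mp hP).2
      induction e using Sym2.ind with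
      | _ x y =>
        have hxs : x ∈ p.support := SimpleGraph.Walk.fst_mem_support_of_mem_edges p h1
        have hys : y ∈ p.support := SimpleGraph.Walk.snd_mem_support_of_mem_edges p h1
        have hxy : x ≠ y := by simpa using hnd
        by_cases hxw : x = w
        · refine ⟨y, by simp [hys], ?_, ?_, Sym2.mem_mk_right _ _⟩
          · rintro rfl; exact hu hys
          · rintro rfl; exact hxy hxw
        · refine ⟨x, by simp [hxs], ?_, hxw, Sym2.mem_mk_left _ _⟩
          rintro rfl; exact hu hxs

end Aux

section Exchange

variable {V : Type*} [Fintype V] {G : SimpleGraph V} {vcol : V → ℕ} {ecol : Sym2 V → ℕ}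

lemma totalColorsUsed_le (vc : V → ℕ) (ec : Sym2 V → ℕ) :
    totalColorsUsed G vc ec ≤ Nat.card V + Nat.card (Sym2 V) := by
  have h1 : (Set.range vc).ncard ≤ Nat.card V := by
    rw [← Set.image_univ]
    calc (vc '' Set.univ).ncard ≤ (Set.univ : Set V).ncard :=
          Set.ncard_image_le (Set.finite_univ)
      _ = Nat.card V := Set.ncard_univ V
  have h2 : (ec '' G.edgeSet).ncard ≤ Nat.card (Sym2 V) := by
    calc (ec '' G.edgeSet).ncard ≤ G.edgeSet.ncard :=
          Set.ncard_image_le (G.edgeSet.toFinite)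
      _ ≤ (Set.univ : Set (Sym2 V)).ncard := Set.ncard_le_ncard (Set.subset_univ _)
            Set.finite_univ
      _ = Nat.card (Sym2 V) := Set.ncard_univ _
  calc totalColorsUsed G vc ec ≤ (Set.range vc).ncard + (ec '' G.edgeSet).ncard :=
        Set.ncard_union_le _ _
    _ ≤ _ := Nat.add_le_add h1 h2

lemma used_le_of_extremal (hext : totalColorsUsed G vcol ecol = tmc G)
    (vc : V → ℕ) (ec : Sym2 V → ℕ) (h : IsTMCColoring G vc ec) :
    totalColorsUsed G vc ec ≤ totalColorsUsed G vcol ecol := by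
  rw [hext]
  apply le_csSup
  · refine ⟨Nat.card V + Nat.card (Sym2 V), ?_⟩
    rintro k ⟨vc', ec', _, rfl⟩
    exact totalColorsUsed_le vc' ec'
  · exact ⟨vc, ec, h, rfl⟩

lemma exists_fresh : ∃ N : ℕ, N ∉ Set.range vcol ∪ ecol '' G.edgeSet := by
  have hfin : (Set.range vcol ∪ ecol '' G.edgeSet).Finite :=
    (Set.finite_range vcol).union (G.edgeSet.toFinite.image ecol)
  exact hfin.infinite_compl.nonempty

lemma exchange_contradiction (hext : totalColorsUsed G vcol ecol = tmc G) (c N : ℕ)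
    (hN : N ∉ Set.range vcol ∪ ecol '' G.edgeSet)
    (X : Set (Sym2 V)) (Y : Set V)
    (vc' : V → ℕ) (ec' : Sym2 V → ℕ)
    (hec1 : ∀ e ∈ X, ec' e = N) (hec2 : ∀ e, e ∉ X → ec' e = ecol e)
    (hvc1 : ∀ v ∈ Y, vc' v = N) (hvc2 : ∀ v, v ∉ Y → vc' v = vcol v)
    (hXc : ∀ e ∈ X, e ∈ G.edgeSet ∧ ecol e = c)
    (hYc : ∀ v ∈ Y, vcol v = c)
    (hsur : (∃ e ∈ G.edgeSet, ecol e = c ∧ e ∉ X) ∨ (∃ v, vcol v = c ∧ v ∉ Y))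
    (hne : X.Nonempty ∨ Y.Nonempty)
    (htmc : IsTMCColoring G vc' ec') : False := by
  set old := Set.range vcol ∪ ecol '' G.edgeSet with hold
  set new := Set.range vc' ∪ ec' '' G.edgeSet with hnew
  have hcnew : c ∈ new := by
    rcases hsur with ⟨e, heG, hec, heX⟩ | ⟨v, hvc, hvY⟩
    · exact Or.inr ⟨e, heG, by rw [hec2 e heX, hec]⟩
    · exact Or.inl ⟨v, by rw [hvc2 v hvY, hvc]⟩
  have hsub : insert N old ⊆ new := by
    rintro d (rfl | hd)
    · rcases hne with ⟨e, heX⟩ | ⟨v, hvY⟩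
      · exact Or.inr ⟨e, (hXc e heX).1, hec1 e heX⟩
      · exact Or.inl ⟨v, hvc1 v hvY⟩
    · rcases hd with ⟨v, rfl⟩ | ⟨e, heG, rfl⟩
      · by_cases hvY : v ∈ Y
        · rw [hYc v hvY]; exact hcnew
        · exact Or.inl ⟨v, hvc2 v hvY⟩
      · by_cases heX : e ∈ X
        · rw [(hXc e heX).2]; exact hcnew
        · exact Or.inr ⟨e, heG, hec2 e heX⟩
  have holdfin : old.Finite := (Set.finite_range vcol).union (G.edgeSet.toFinite.image ecol)
  have hnewfin : new.Finite := (Set.finite_range vc').union (G.edgeSet.toFinite.image ec')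
  have h1 : old.ncard + 1 ≤ new.ncard := by
    have := Set.ncard_insert_of_notMem hN holdfin
    rw [← this]
    exact Set.ncard_le_ncard hsub hnewfin
  have h2 : new.ncard ≤ old.ncard := used_le_of_extremal hext vc' ec' htmc
  omega

end Exchange

section HSKsec

variable {V : Type*} (G : SimpleGraph V) (vcol : V → ℕ) (ecol : Sym2 V → ℕ) (c : ℕ)

/-- The graph consisting of edges in `K` joining two vertices colored `c`. -/
def HSK (K : Set (Sym2 V)) : SimpleGraph V where
  Adj x y := vcol x = c ∧ vcol y = c ∧ G.Adj x y ∧ s(x, y) ∈ K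
  symm := ⟨by
    rintro x y ⟨h1, h2, h3, h4⟩
    exact ⟨h2, h1, h3.symm, by rwa [Sym2.eq_swap]⟩⟩
  loopless := ⟨fun x h => G.loopless.irrefl x h.2.2.1⟩

variable {G vcol ecol c}

lemma hsk_support {K : Set (Sym2 V)} {s t : V} (q : (HSK G vcol c K).Walk s t)
    (hs : vcol s = c) : ∀ x ∈ q.support, vcol x = c := by
  induction q with
  | nil => intro x hx; simp at hx; subst hx; exact hs
  | cons h p ih =>
    intro x hx
    rw [SimpleGraph.Walk.support_cons] at hx
    rcases List.mem_cons.mp hx with rfl | hx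
    · exact h.1
    · exact ih h.2.1 x hx

lemma hsk_edges {K : Set (Sym2 V)} {s t : V} (q : (HSK G vcol c K).Walk s t) :
    ∀ e ∈ q.edges, e ∈ K := by
  induction q with
  | nil => simp
  | cons h p ih =>
    intro e he
    rw [SimpleGraph.Walk.edges_cons] at he
    rcases List.mem_cons.mp he with rfl | he
    · exact h.2.2.2
    · exact ih e he

lemma hsk_toWalk {K : Set (Sym2 V)} {s t : V} (q : (HSK G vcol c K).Walk s t) :
    ∃ Q : G.Walk s t, Q.support = q.support ∧ Q.edges = q.edges := by
  induction q with
  | nil => exact ⟨SimpleGraph.Walk.nil, by simp, by simp⟩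
  | cons h p ih =>
    obtain ⟨Q, hs, he⟩ := ih
    exact ⟨SimpleGraph.Walk.cons h.2.2.1 Q, by simp [hs], by simp [he]⟩

lemma walk_to_hsk {K : Set (Sym2 V)} {s t : V} (Q : G.Walk s t)
    (hsupp : ∀ x ∈ Q.support, vcol x = c) (hedge : ∀ e ∈ Q.edges, e ∈ K) :
    (HSK G vcol c K).Reachable s t := by
  induction Q with
  | nil => exact SimpleGraph.Reachable.refl _
  | @cons a b d h p ih =>
    have hadj : (HSK G vcol c K).Adj a b := by
      refine ⟨hsupp a (by simp), hsupp b (by simp), h, hedge _ (by simp)⟩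
    refine hadj.reachable.trans (ih ?_ ?_)
    · intro x hx; exact hsupp x (by simp [hx])
    · intro e he; exact hedge e (by simp [he])

section LOC

variable {Y : Set V} {X : Set (Sym2 V)}
variable (hclose : ∀ y z, y ∈ Y → vcol z = c → G.Adj y z → ecol s(y, z) = c → z ∈ Y)
variable (hXdef : ∀ e, e ∈ X ↔ (e ∈ G.edgeSet ∧ ecol e = c) ∧ ∃ v ∈ Y, v ∈ e)

include hclose hXdef in
lemma loc_fwd {b w : V} (P : G.Walk b w) :
    ∀ (u : V) (h : G.Adj u b), (SimpleGraph.Walk.cons h P).IsPath →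
    (∀ e ∈ (SimpleGraph.Walk.cons h P).edges, ecol e = c) →
    (∀ x ∈ (SimpleGraph.Walk.cons h P).support, x ≠ u → x ≠ w → vcol x = c) →
    s(u, b) ∈ X →
    (∀ e ∈ (SimpleGraph.Walk.cons h P).edges, e ∈ X) ∧
      (∀ x ∈ (SimpleGraph.Walk.cons h P).support, x ≠ u → x ≠ w → x ∈ Y) := by
  induction P with
  | nil =>
    intro u h _ _ _ hX1
    constructor
    · intro e he; simp at he; subst he; exact hX1
    · intro x hx hxu hxw
      simp [SimpleGraph.Walk.support_cons] at hx
      rcases hx with rfl | rfl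
      · exact absurd rfl hxu
      · exact absurd rfl hxw
  | @cons b b2 w h' p' ih =>
    intro u h hpath hcol hint hX1
    -- b is interior
    have hbu : b ≠ u := h.ne'
    have hbw : b ≠ w := by
      rintro rfl
      have hp1 := (SimpleGraph.Walk.cons_isPath_iff h _).mp hpath
      have hp2 := (SimpleGraph.Walk.cons_isPath_iff h' p').mp hp1.1
      exact hp2.2 (SimpleGraph.Walk.end_mem_support p')
    have hbc : vcol b = c := hint b (by simp) hbu hbw
    have hbY : b ∈ Y := by
      obtain ⟨-, v, hvY, hv⟩ := (hXdef _).mp hX1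
      rw [Sym2.mem_iff] at hv
      rcases hv with rfl | rfl
      · exact hclose v b hvY hbc h (hcol _ (by simp))
      · exact hvY
    have hX2 : s(b, b2) ∈ X := by
      refine (hXdef _).mpr ⟨⟨h', hcol _ (by simp)⟩, b, hbY, Sym2.mem_mk_left _ _⟩
    have hihpath : (SimpleGraph.Walk.cons h' p').IsPath :=
      ((SimpleGraph.Walk.cons_isPath_iff h _).mp hpath).1
    have hihcol : ∀ e ∈ (SimpleGraph.Walk.cons h' p').edges, ecol e = c := by
      intro e he
      exact hcol e (by rw [SimpleGraph.Walk.edges_cons]; exact List.mem_cons_of_mem _ he)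
    have hihint : ∀ x ∈ (SimpleGraph.Walk.cons h' p').support, x ≠ b → x ≠ w → vcol x = c := by
      intro x hx hxb hxw
      have hxu : x ≠ u := by
        rintro rfl
        exact ((SimpleGraph.Walk.cons_isPath_iff h _).mp hpath).2 hx
      exact hint x (by rw [SimpleGraph.Walk.support_cons]; exact List.mem_cons_of_mem _ hx) hxu hxw
    obtain ⟨ihE, ihY⟩ := ih b h' hihpath hihcol hihint hX2
    constructor
    · intro e he
      rw [SimpleGraph.Walk.edges_cons] at he
      rcases List.mem_cons.mp he with rfl | he
      · exact hX1
      · exact ihE e he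
    · intro x hx hxu hxw
      rw [SimpleGraph.Walk.support_cons] at hx
      rcases List.mem_cons.mp hx with rfl | hx
      · exact absurd rfl hxu
      · by_cases hxb : x = b
        · subst hxb; exact hbY
        · exact ihY x hx hxb hxw

include hclose hXdef in
lemma loc_bwd {b w : V} (P : G.Walk b w) :
    ∀ (u : V) (h : G.Adj u b), (SimpleGraph.Walk.cons h P).IsPath →
    (∀ e ∈ (SimpleGraph.Walk.cons h P).edges, ecol e = c) →
    (∀ x ∈ (SimpleGraph.Walk.cons h P).support, x ≠ u → x ≠ w → vcol x = c) →
    (∃ e ∈ (SimpleGraph.Walk.cons h P).edges, e ∈ X) →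
    s(u, b) ∈ X := by
  induction P with
  | nil =>
    intro u h _ _ _ hex
    obtain ⟨e, he, heX⟩ := hex
    simp at he; subst he; exact heX
  | @cons b b2 w h' p' ih =>
    intro u h hpath hcol hint hex
    obtain ⟨e, he, heX⟩ := hex
    rw [SimpleGraph.Walk.edges_cons] at he
    rcases List.mem_cons.mp he with rfl | he
    · exact heX
    -- the X-edge is in the tail
    have hbu : b ≠ u := h.ne'
    have hbw : b ≠ w := by
      rintro rfl
      have hp1 := (SimpleGraph.Walk.cons_isPath_iff h _).mp hpath
      have hp2 := (SimpleGraph.Walk.cons_isPath_iff h' p').mp hp1.1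
      exact hp2.2 (SimpleGraph.Walk.end_mem_support p')
    have hbc : vcol b = c := hint b (by simp) hbu hbw
    have hihpath : (SimpleGraph.Walk.cons h' p').IsPath :=
      ((SimpleGraph.Walk.cons_isPath_iff h _).mp hpath).1
    have hihcol : ∀ e ∈ (SimpleGraph.Walk.cons h' p').edges, ecol e = c := by
      intro e he'
      exact hcol e (by rw [SimpleGraph.Walk.edges_cons]; exact List.mem_cons_of_mem _ he')
    have hihint : ∀ x ∈ (SimpleGraph.Walk.cons h' p').support, x ≠ b → x ≠ w → vcol x = c := by
      intro x hx hxb hxw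
      have hxu : x ≠ u := by
        rintro rfl
        exact ((SimpleGraph.Walk.cons_isPath_iff h _).mp hpath).2 hx
      exact hint x (by rw [SimpleGraph.Walk.support_cons]; exact List.mem_cons_of_mem _ hx) hxu hxw
    have hX2 : s(b, b2) ∈ X := ih b h' hihpath hihcol hihint ⟨e, he, heX⟩
    have hbY : b ∈ Y := by
      obtain ⟨-, v, hvY, hv⟩ := (hXdef _).mp hX2
      rw [Sym2.mem_iff] at hv
      rcases hv with rfl | rfl
      · exact hvY
      · refine hclose v b hvY hbc h'.symm ?_
        rw [Sym2.eq_swap]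
        exact hihcol _ (by simp)
    exact (hXdef _).mpr ⟨⟨h, hcol _ (by simp)⟩, b, hbY, Sym2.mem_mk_right _ _⟩

end LOC

end HSKsec

section Provider
variable {V : Type*} [DecidableEq V]

variable {G : SimpleGraph V} {vcol : V → ℕ} {ecol : Sym2 V → ℕ} {c : ℕ}

lemma path_provider (K : Set (Sym2 V))
    (hinit : ∀ u, u ∈ (colorSubgraph G ecol c).verts → vcol u ≠ c →
      ∃ z, vcol z = c ∧ G.Adj u z ∧ s(u, z) ∈ K)
    (hconn : ∀ s t, vcol s = c → vcol t = c → (HSK G vcol c K).Reachable s t)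
    {u w : V} (hu : u ∈ (colorSubgraph G ecol c).verts)
    (hw : w ∈ (colorSubgraph G ecol c).verts) :
    ∃ P : G.Walk u w, P.IsPath ∧ (∀ e ∈ P.edges, e ∈ K) ∧
      (∀ x ∈ P.support, x ≠ u → x ≠ w → vcol x = c) := by
  have halfwalk : ∀ y, y ∈ (colorSubgraph G ecol c).verts →
      ∃ (sy : V) (W : G.Walk y sy), vcol sy = c ∧ (∀ e ∈ W.edges, e ∈ K) ∧
        (∀ x ∈ W.support, x = y ∨ vcol x = c) := by
    intro y hy
    by_cases hcy : vcol y = c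
    · exact ⟨y, SimpleGraph.Walk.nil, hcy, by simp, by simp⟩
    · obtain ⟨z, hzc, hadj, hK⟩ := hinit y hy hcy
      refine ⟨z, SimpleGraph.Walk.cons hadj SimpleGraph.Walk.nil, hzc, by simpa using hK, ?_⟩
      intro x hx
      simp [SimpleGraph.Walk.support_cons] at hx
      rcases hx with rfl | rfl
      · exact Or.inl rfl
      · exact Or.inr hzc
  obtain ⟨su, Wu, hsuc, hWuK, hWus⟩ := halfwalk u hu
  obtain ⟨sw, Ww, hswc, hWwK, hWws⟩ := halfwalk w hw
  obtain ⟨q⟩ := hconn su sw hsuc hswc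
  obtain ⟨Q, hQs, hQe⟩ := hsk_toWalk q
  have hQK : ∀ e ∈ Q.edges, e ∈ K := by
    intro e he; rw [hQe] at he; exact hsk_edges q e he
  have hQsupp : ∀ x ∈ Q.support, vcol x = c := by
    intro x hx; rw [hQs] at hx; exact hsk_support q hsuc x hx
  set W : G.Walk u w := Wu.append (Q.append Ww.reverse) with hW
  refine ⟨W.bypass, SimpleGraph.Walk.bypass_isPath W, ?_, ?_⟩
  · intro e he
    have heW := SimpleGraph.Walk.edges_bypass_subset W he
    rw [hW, SimpleGraph.Walk.edges_append, SimpleGraph.Walk.edges_append] at heW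
    rcases List.mem_append.mp heW with h1 | h2
    · exact hWuK e h1
    · rcases List.mem_append.mp h2 with h3 | h4
      · exact hQK e h3
      · rw [SimpleGraph.Walk.edges_reverse, List.mem_reverse] at h4
        exact hWwK e h4
  · intro x hx hxu hxw
    have hxW := SimpleGraph.Walk.support_bypass_subset W hx
    rw [hW] at hxW
    rw [SimpleGraph.Walk.mem_support_append_iff] at hxW
    rcases hxW with h1 | h2
    · rcases hWus x h1 with rfl | h; · exact absurd rfl hxu
      · exact h
    · rw [SimpleGraph.Walk.mem_support_append_iff] at h2
      rcases h2 with h3 | h4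
      · exact hQsupp x h3
      · rw [SimpleGraph.Walk.support_reverse, List.mem_reverse] at h4
        rcases hWws x h4 with rfl | h; · exact absurd rfl hxw
        · exact h

end Provider

section Main

set_option linter.unusedSectionVars false

variable {V : Type*} [Fintype V] [DecidableEq V] {G : SimpleGraph V}
variable {vcol : V → ℕ} {ecol : Sym2 V → ℕ} {c : ℕ}

lemma tmc_unchanged {vc' : V → ℕ} {ec' : Sym2 V → ℕ} {u w : V} {P : G.Walk u w}
    (h : IsTMCPath G vcol ecol P)
    (he : ∀ e ∈ P.edges, ec' e = ecol e)
    (hv : ∀ x ∈ P.support, x ≠ u → x ≠ w → vc' x = vcol x) : IsTMCPath G vc' ec' P := by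
  obtain ⟨hp, d, hd1, hd2⟩ := h
  exact ⟨hp, d, fun e he' => (he e he').trans (hd1 e he'),
    fun x hx h1 h2 => (hv x hx h1 h2).trans (hd2 x hx h1 h2)⟩

lemma tmc_path_c {u w : V} {P : G.Walk u w} (h : IsTMCPath G vcol ecol P)
    {e : Sym2 V} (he : e ∈ P.edges) (hec : ecol e = c) :
    (∀ e' ∈ P.edges, ecol e' = c) ∧ (∀ x ∈ P.support, x ≠ u → x ≠ w → vcol x = c) := by
  obtain ⟨hp, d, hd1, hd2⟩ := h
  have hdc : d = c := by rw [← hec]; exact (hd1 e he).symm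
  subst hdc
  exact ⟨hd1, hd2⟩

lemma endpoints_in_VH {u w : V} {P : G.Walk u w} (hnn : ¬ P.Nil)
    (hcol : ∀ e ∈ P.edges, ecol e = c) :
    u ∈ (colorSubgraph G ecol c).verts ∧ w ∈ (colorSubgraph G ecol c).verts := by
  constructor
  · cases P with
    | nil => simp at hnn
    | @cons _ b _ h p =>
      exact colorSubgraph_verts_iff.mpr ⟨s(u, b), h, hcol _ (by simp), Sym2.mem_mk_left _ _⟩
  · cases hP : P.reverse with
    | nil =>
      exfalso
      apply hnn
      have := congrArg SimpleGraph.Walk.length hP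
      rw [SimpleGraph.Walk.length_reverse] at this
      simp only [SimpleGraph.Walk.length_nil] at this
      exact SimpleGraph.Walk.nil_iff_length_eq.mpr this
    | @cons _ b _ h p =>
      refine colorSubgraph_verts_iff.mpr ⟨s(w, b), h, ?_, Sym2.mem_mk_left _ _⟩
      apply hcol
      have : s(w, b) ∈ P.reverse.edges := by rw [hP]; simp
      rwa [SimpleGraph.Walk.edges_reverse, List.mem_reverse] at this

lemma hsk_detour {e0 : Sym2 V} {wd bd : V}
    (hdet : (HSK G vcol c ({e | e ∈ G.edgeSet ∧ ecol e = c} \ {e0})).Reachable wd bd)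
    (he0 : e0 = s(wd, bd)) {s t : V}
    (hst : (HSK G vcol c {e | e ∈ G.edgeSet ∧ ecol e = c}).Reachable s t) :
    (HSK G vcol c ({e | e ∈ G.edgeSet ∧ ecol e = c} \ {e0})).Reachable s t := by
  obtain ⟨q⟩ := hst
  induction q with
  | nil => exact SimpleGraph.Reachable.refl _
  | @cons x y z h p ih =>
    refine SimpleGraph.Reachable.trans ?_ ih
    by_cases hxy : s(x, y) = e0
    · rw [he0] at hxy
      rw [Sym2.eq_iff] at hxy
      rcases hxy with ⟨rfl, rfl⟩ | ⟨rfl, rfl⟩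
      · exact hdet
      · exact hdet.symm
    · exact SimpleGraph.Adj.reachable ⟨h.1, h.2.1, h.2.2.1, h.2.2.2, hxy⟩

variable (hf : IsTMCColoring G vcol ecol) (hext : totalColorsUsed G vcol ecol = tmc G)

include hf hext in
lemma endpoint_colored {e0 : Sym2 V} (he0 : e0 ∈ G.edgeSet) (hce0 : ecol e0 = c)
    (hsur : (∃ e1 ∈ G.edgeSet, ecol e1 = c ∧ e1 ≠ e0) ∨ (∃ v, vcol v = c)) :
    ∃ x ∈ e0, vcol x = c := by
  by_contra hcon
  push_neg at hcon
  obtain ⟨N, hN⟩ := exists_fresh (G := G) (vcol := vcol) (ecol := ecol)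
  classical
  set ec' : Sym2 V → ℕ := fun e => if e = e0 then N else ecol e with hec'
  have htmc : IsTMCColoring G vcol ec' := by
    intro u w
    obtain ⟨P, hP⟩ := hf u w
    rcases le_or_gt P.length 1 with hlen | hlen
    · exact ⟨P, short_isTMCPath G vcol ec' P hP.1 hlen⟩
    · by_cases hmem : e0 ∈ P.edges
      · exfalso
        obtain ⟨hcol, hint⟩ := tmc_path_c hP hmem hce0
        obtain ⟨x, hxs, hxu, hxw, hxe⟩ := exists_interior_endpoint G P hP.1 hlen hmem
        exact hcon x hxe (hint x hxs hxu hxw)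
      · refine ⟨P, tmc_unchanged hP ?_ (fun _ _ _ _ => rfl)⟩
        intro e he
        have hne : e ≠ e0 := fun h => hmem (h ▸ he)
        simp [hec', hne]
  refine exchange_contradiction hext c N hN {e0} ∅ vcol ec' ?_ ?_ ?_ ?_ ?_ ?_ ?_ ?_ htmc
  · intro e he; rw [Set.mem_singleton_iff] at he; simp [hec', he]
  · intro e he; rw [Set.mem_singleton_iff] at he; simp [hec', he]
  · simp
  · intro v _; rfl
  · intro e he; rw [Set.mem_singleton_iff] at he; subst he; exact ⟨he0, hce0⟩
  · simp
  · rcases hsur with ⟨e1, h1, h2, h3⟩ | ⟨v, hv⟩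
    · exact Or.inl ⟨e1, h1, h2, h3⟩
    · exact Or.inr ⟨v, hv, by simp⟩
  · exact Or.inl ⟨e0, rfl⟩

include hf hext in
lemma c_reachable {a0 : V} (ha0 : vcol a0 = c) :
    ∀ s, vcol s = c →
      (HSK G vcol c {e | e ∈ G.edgeSet ∧ ecol e = c}).Reachable a0 s := by
  by_contra hcon
  push_neg at hcon
  obtain ⟨s0, hs0c, hs0⟩ := hcon
  obtain ⟨N, hN⟩ := exists_fresh (G := G) (vcol := vcol) (ecol := ecol)
  classical
  set Ec : Set (Sym2 V) := {e | e ∈ G.edgeSet ∧ ecol e = c} with hEc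
  set Y : Set V := {v | vcol v = c ∧ (HSK G vcol c Ec).Reachable a0 v} with hY
  set X : Set (Sym2 V) := {e | (e ∈ G.edgeSet ∧ ecol e = c) ∧ ∃ v ∈ Y, v ∈ e} with hX
  have hclose : ∀ y z, y ∈ Y → vcol z = c → G.Adj y z → ecol s(y, z) = c → z ∈ Y := by
    intro y z hy hz hadj hcyz
    refine ⟨hz, hy.2.trans (SimpleGraph.Adj.reachable ?_)⟩
    exact ⟨hy.1, hz, hadj, (G.mem_edgeSet).mpr hadj, hcyz⟩
  have hXdef : ∀ e, e ∈ X ↔ (e ∈ G.edgeSet ∧ ecol e = c) ∧ ∃ v ∈ Y, v ∈ e := fun e => Iff.rfl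
  set vc' : V → ℕ := fun v => if v ∈ Y then N else vcol v with hvc'
  set ec' : Sym2 V → ℕ := fun e => if e ∈ X then N else ecol e with hec'
  have htmc : IsTMCColoring G vc' ec' := by
    intro u w
    obtain ⟨P, hP⟩ := hf u w
    rcases le_or_gt P.length 1 with hlen | hlen
    · exact ⟨P, short_isTMCPath G vc' ec' P hP.1 hlen⟩
    · obtain ⟨hp, d, hd1, hd2⟩ := hP
      by_cases hdc : d = c
      · subst hdc
        by_cases hex : ∃ e ∈ P.edges, e ∈ X
        · cases P with
          | nil => simp at hlen
          | @cons _ b _ h p =>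
            have hfirst : s(u, b) ∈ X := loc_bwd hclose hXdef p u h hp hd1 hd2 hex
            obtain ⟨hallX, hallY⟩ := loc_fwd hclose hXdef p u h hp hd1 hd2 hfirst
            refine ⟨SimpleGraph.Walk.cons h p, hp, N, ?_, ?_⟩
            · intro e he
              simp only [hec']
              rw [if_pos (hallX e he)]
            · intro x hx hxu hxw
              simp only [hvc']
              rw [if_pos (hallY x hx hxu hxw)]
        · push_neg at hex
          refine ⟨P, tmc_unchanged ⟨hp, d, hd1, hd2⟩ ?_ ?_⟩
          · intro e he
            simp only [hec']
            rw [if_neg (hex e he)]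
          · intro x hx hxu hxw
            simp only [hvc']
            rw [if_neg]
            intro hxY
            obtain ⟨e, he, hxe⟩ := mem_edge_of_mem_support_ne_start G P hx hxu
            exact hex e he ⟨⟨SimpleGraph.Walk.edges_subset_edgeSet P he, hd1 e he⟩, x, hxY, hxe⟩
      · refine ⟨P, tmc_unchanged ⟨hp, d, hd1, hd2⟩ ?_ ?_⟩
        · intro e he
          simp only [hec']
          rw [if_neg]
          intro heX
          exact hdc ((hd1 e he).symm.trans heX.1.2)
        · intro x hx hxu hxw
          simp only [hvc']
          rw [if_neg]
          intro hxY
          exact hdc ((hd2 x hx hxu hxw).symm.trans hxY.1)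
  refine exchange_contradiction hext c N hN X Y vc' ec' ?_ ?_ ?_ ?_ ?_ ?_ ?_ ?_ htmc
  · intro e he; simp only [hec']; rw [if_pos he]
  · intro e he; simp only [hec']; rw [if_neg he]
  · intro v hv; simp only [hvc']; rw [if_pos hv]
  · intro v hv; simp only [hvc']; rw [if_neg hv]
  · intro e he; exact he.1
  · intro v hv; exact hv.1
  · exact Or.inr ⟨s0, hs0c, fun h => hs0 h.2⟩
  · exact Or.inr ⟨a0, ha0, SimpleGraph.Reachable.refl a0⟩

include hf hext in
lemma edge_removal_exchange {e0 : Sym2 V} (he0 : e0 ∈ G.edgeSet) (hce0 : ecol e0 = c)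
    (hsur : ∃ e1, e1 ∈ G.edgeSet ∧ ecol e1 = c ∧ e1 ≠ e0)
    (hinitK : ∀ u, u ∈ (colorSubgraph G ecol c).verts → vcol u ≠ c →
      ∃ z, vcol z = c ∧ G.Adj u z ∧
        s(u, z) ∈ ({e | e ∈ G.edgeSet ∧ ecol e = c} \ {e0}))
    (hconnK : ∀ s t, vcol s = c → vcol t = c →
      (HSK G vcol c ({e | e ∈ G.edgeSet ∧ ecol e = c} \ {e0})).Reachable s t) :
    False := by
  obtain ⟨N, hN⟩ := exists_fresh (G := G) (vcol := vcol) (ecol := ecol)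
  classical
  set ec' : Sym2 V → ℕ := fun e => if e = e0 then N else ecol e with hec'
  have htmc : IsTMCColoring G vcol ec' := by
    intro u w
    obtain ⟨P, hP⟩ := hf u w
    rcases le_or_gt P.length 1 with hlen | hlen
    · exact ⟨P, short_isTMCPath G vcol ec' P hP.1 hlen⟩
    · by_cases hmem : e0 ∈ P.edges
      · obtain ⟨hcol, hint⟩ := tmc_path_c hP hmem hce0
        have hnn : ¬ P.Nil := by
          rw [SimpleGraph.Walk.nil_iff_length_eq]; omega
        obtain ⟨hu, hw⟩ := endpoints_in_VH hnn hcol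
        obtain ⟨P', hP'path, hP'K, hP'int⟩ :=
          path_provider _ hinitK hconnK hu hw
        refine ⟨P', hP'path, c, ?_, ?_⟩
        · intro e he
          obtain ⟨heEc, hene⟩ := hP'K e he
          have : e ≠ e0 := by simpa using hene
          simp only [hec']
          rw [if_neg this]
          exact heEc.2
        · exact hP'int
      · refine ⟨P, tmc_unchanged hP ?_ (fun _ _ _ _ => rfl)⟩
        intro e he
        have hne : e ≠ e0 := fun h => hmem (h ▸ he)
        simp [hec', hne]
  refine exchange_contradiction hext c N hN {e0} ∅ vcol ec' ?_ ?_ ?_ ?_ ?_ ?_ ?_ ?_ htmc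
  · intro e he; rw [Set.mem_singleton_iff] at he; simp [hec', he]
  · intro e he; rw [Set.mem_singleton_iff] at he; simp [hec', he]
  · simp
  · intro v _; rfl
  · intro e he; rw [Set.mem_singleton_iff] at he; subst he; exact ⟨he0, hce0⟩
  · simp
  · obtain ⟨e1, h1, h2, h3⟩ := hsur
    exact Or.inl ⟨e1, h1, h2, h3⟩
  · exact Or.inl ⟨e0, rfl⟩

include hf hext in
lemma no_c_cycle
    (hend : ∀ e0, e0 ∈ G.edgeSet → ecol e0 = c → ∃ x ∈ e0, vcol x = c)
    (hreach : ∀ s t, vcol s = c → vcol t = c →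
      (HSK G vcol c {e | e ∈ G.edgeSet ∧ ecol e = c}).Reachable s t)
    {w : V} (CY : G.Walk w w) (hcy : CY.IsCycle)
    (hcol : ∀ e ∈ CY.edges, e ∈ G.edgeSet ∧ ecol e = c) : False := by
  classical
  by_cases hall : ∀ x ∈ CY.support, vcol x = c
  · -- Case B : all vertices of the cycle are colored c
    cases CY with
    | nil => exact hcy.ne_nil rfl
    | @cons _ b _ h tail =>
      have hcyc := (SimpleGraph.Walk.cons_isCycle_iff tail h).mp hcy
      have he0G : s(w, b) ∈ G.edgeSet := h
      have he0c : ecol s(w, b) = c := (hcol _ (by simp)).2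
      have hwc : vcol w = c := hall w (by simp)
      have hbc : vcol b = c := hall b (by simp [SimpleGraph.Walk.start_mem_support])
      -- detour : b reachable from w avoiding e0
      have hdet : (HSK G vcol c
          ({e | e ∈ G.edgeSet ∧ ecol e = c} \ {s(w, b)})).Reachable b w := by
        apply walk_to_hsk tail
        · intro x hx
          exact hall x (by rw [SimpleGraph.Walk.support_cons]; exact List.mem_cons_of_mem _ hx)
        · intro e he
          refine ⟨hcol e (by rw [SimpleGraph.Walk.edges_cons]; exact List.mem_cons_of_mem _ he), ?_⟩
          simp only [Set.mem_singleton_iff]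
          intro heq
          exact hcyc.2 (heq ▸ he)
      have hconnK : ∀ s t, vcol s = c → vcol t = c →
          (HSK G vcol c ({e | e ∈ G.edgeSet ∧ ecol e = c} \ {s(w, b)})).Reachable s t := by
        intro s t hs ht
        exact hsk_detour hdet.symm rfl (hreach s t hs ht)
      have hinitK : ∀ u, u ∈ (colorSubgraph G ecol c).verts → vcol u ≠ c →
          ∃ z, vcol z = c ∧ G.Adj u z ∧
            s(u, z) ∈ ({e | e ∈ G.edgeSet ∧ ecol e = c} \ {s(w, b)}) := by
        intro u hu huc
        obtain ⟨e1, he1G, he1c, hue1⟩ := colorSubgraph_verts_iff.mp hu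
        obtain ⟨z, rfl⟩ := Sym2.mem_iff_exists.mp hue1
        have hzc : vcol z = c := by
          obtain ⟨x, hx, hxc⟩ := hend _ he1G he1c
          rw [Sym2.mem_iff] at hx
          rcases hx with rfl | rfl
          · exact absurd hxc huc
          · exact hxc
        refine ⟨z, hzc, (G.mem_edgeSet).mp he1G, ⟨he1G, he1c⟩, ?_⟩
        simp only [Set.mem_singleton_iff]
        intro heq
        rw [Sym2.eq_iff] at heq
        rcases heq with ⟨rfl, rfl⟩ | ⟨rfl, rfl⟩
        · exact huc hwc
        · exact huc hbc
      -- survivor edge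
      cases tail with
      | nil => exact G.loopless.irrefl _ h
      | @cons _ b2 _ h2 tail3 =>
        refine edge_removal_exchange hf hext he0G he0c ⟨s(b, b2), h2, ?_, ?_⟩ hinitK hconnK
        · exact (hcol _ (by simp)).2
        · intro heq
          exact hcyc.2 (heq ▸ (by simp : s(b, b2) ∈ (SimpleGraph.Walk.cons h2 tail3).edges))
  · -- Case A : some vertex of the cycle is not colored c
    push_neg at hall
    obtain ⟨z, hzsup, hzc⟩ := hall
    set CY' := CY.rotate z hzsup with hCY'
    have hcy' : CY'.IsCycle := hcy.rotate hzsup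
    have hedges' : ∀ e ∈ CY'.edges, e ∈ CY.edges := by
      intro e he
      exact (SimpleGraph.Walk.rotate_edges CY z hzsup).mem_iff.mp he
    clear_value CY'
    cases CY' with
    | nil => exact hcy'.ne_nil rfl
    | @cons _ b _ hzb tail =>
      have hcyc := (SimpleGraph.Walk.cons_isCycle_iff tail hzb).mp hcy'
      have he0G : s(z, b) ∈ G.edgeSet := hzb
      have he0c : ecol s(z, b) = c := (hcol _ (hedges' _ (by simp))).2
      have hbc : vcol b = c := by
        obtain ⟨x, hx, hxc⟩ := hend _ he0G he0c
        rw [Sym2.mem_iff] at hx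
        rcases hx with rfl | rfl
        · exact absurd hxc hzc
        · exact hxc
      have hzneb : z ≠ b := fun h => hzc (h ▸ hbc)
      -- last edge s(z, a)
      cases htr : tail.reverse with
      | nil =>
        exfalso
        have : tail.length = 0 := by
          have := congrArg SimpleGraph.Walk.length htr
          rwa [SimpleGraph.Walk.length_reverse, SimpleGraph.Walk.length_nil] at this
        have h3 := hcy'.three_le_length
        rw [SimpleGraph.Walk.length_cons] at h3
        omega
      | @cons _ a _ hza tail2 =>
        have hzaE : s(z, a) ∈ tail.edges := by
          have : s(z, a) ∈ tail.reverse.edges := by rw [htr]; simp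
          rwa [SimpleGraph.Walk.edges_reverse, List.mem_reverse] at this
        have hzaG : s(z, a) ∈ G.edgeSet := hza
        have hzac : ecol s(z, a) = c := by
          refine (hcol _ (hedges' _ ?_)).2
          rw [SimpleGraph.Walk.edges_cons]
          exact List.mem_cons_of_mem _ hzaE
        have hac : vcol a = c := by
          obtain ⟨x, hx, hxc⟩ := hend _ hzaG hzac
          rw [Sym2.mem_iff] at hx
          rcases hx with rfl | rfl
          · exact absurd hxc hzc
          · exact hxc
        have haneb : a ≠ b := by
          rintro rfl
          have htp : tail.reverse.IsPath := hcyc.1.reverse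
          rw [htr] at htp
          have htp2 := (SimpleGraph.Walk.cons_isPath_iff hza tail2).mp htp
          have h20 : tail2.length = 0 := by
            cases tail2 with
            | nil => rfl
            | cons h2 p2 =>
              exfalso
              have := (SimpleGraph.Walk.cons_isPath_iff h2 p2).mp htp2.1
              exact this.2 (SimpleGraph.Walk.end_mem_support p2)
          have hlt : tail.length = 1 := by
            have := congrArg SimpleGraph.Walk.length htr
            rw [SimpleGraph.Walk.length_reverse, SimpleGraph.Walk.length_cons, h20] at this
            omega
          have h3 := hcy'.three_le_length
          rw [SimpleGraph.Walk.length_cons] at h3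
          omega
        have hKmono : HSK G vcol c {e | e ∈ G.edgeSet ∧ ecol e = c} ≤
            HSK G vcol c ({e | e ∈ G.edgeSet ∧ ecol e = c} \ {s(z, b)}) := by
          intro x y hxy
          refine ⟨hxy.1, hxy.2.1, hxy.2.2.1, hxy.2.2.2, ?_⟩
          simp only [Set.mem_singleton_iff]
          intro heq
          rw [Sym2.eq_iff] at heq
          rcases heq with ⟨rfl, rfl⟩ | ⟨rfl, rfl⟩
          · exact hzc hxy.1
          · exact hzc hxy.2.1
        have hconnK : ∀ s t, vcol s = c → vcol t = c →
            (HSK G vcol c ({e | e ∈ G.edgeSet ∧ ecol e = c} \ {s(z, b)})).Reachable s t := by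
          intro s t hs ht
          exact (hreach s t hs ht).mono hKmono
        have hinitK : ∀ u, u ∈ (colorSubgraph G ecol c).verts → vcol u ≠ c →
            ∃ y, vcol y = c ∧ G.Adj u y ∧
              s(u, y) ∈ ({e | e ∈ G.edgeSet ∧ ecol e = c} \ {s(z, b)}) := by
          intro u hu huc
          obtain ⟨e1, he1G, he1c, hue1⟩ := colorSubgraph_verts_iff.mp hu
          obtain ⟨y, rfl⟩ := Sym2.mem_iff_exists.mp hue1
          have hyc : vcol y = c := by
            obtain ⟨x, hx, hxc⟩ := hend _ he1G he1c
            rw [Sym2.mem_iff] at hx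
            rcases hx with rfl | rfl
            · exact absurd hxc huc
            · exact hxc
          by_cases heq : s(u, y) = s(z, b)
          · -- u must be z ; use the edge s(z, a) instead
            rw [Sym2.eq_iff] at heq
            rcases heq with ⟨rfl, rfl⟩ | ⟨rfl, rfl⟩
            · refine ⟨a, hac, hza, ⟨hzaG, hzac⟩, ?_⟩
              simp only [Set.mem_singleton_iff]
              intro heq2
              rw [Sym2.eq_iff] at heq2
              rcases heq2 with ⟨-, h5⟩ | ⟨h5, -⟩
              · exact haneb h5
              · exact hzc (h5 ▸ hbc)
            · exact absurd hbc huc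
          · exact ⟨y, hyc, (G.mem_edgeSet).mp he1G, ⟨⟨he1G, he1c⟩, by simpa using heq⟩⟩
        -- survivor edge : second edge of the rotated cycle
        cases tail with
        | nil => exact G.loopless.irrefl _ hzb
        | @cons _ b2 _ h2 tail3 =>
          refine edge_removal_exchange hf hext he0G he0c ⟨s(b, b2), h2, ?_, ?_⟩ hinitK hconnK
          · exact (hcol _ (hedges' _ (by simp))).2
          · intro heq
            exact hcyc.2 (heq ▸ (by simp : s(b, b2) ∈ (SimpleGraph.Walk.cons h2 tail3).edges))

end Main

section Helpers2

set_option linter.unusedSectionVars false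

variable {V : Type*} [Fintype V] [DecidableEq V] {G : SimpleGraph V}
variable {vcol : V → ℕ} {ecol : Sym2 V → ℕ} {c : ℕ}

lemma walk_to_coe {u w : V} (Q : G.Walk u w)
    (hQ : ∀ e ∈ Q.edges, e ∈ G.edgeSet ∧ ecol e = c)
    (hu : u ∈ (colorSubgraph G ecol c).verts) (hw : w ∈ (colorSubgraph G ecol c).verts) :
    Nonempty ((colorSubgraph G ecol c).coe.Walk ⟨u, hu⟩ ⟨w, hw⟩) := by
  induction Q with
  | nil => exact ⟨SimpleGraph.Walk.nil⟩
  | @cons a b d h p ih =>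
    have hedge : s(a, b) ∈ G.edgeSet ∧ ecol s(a, b) = c := hQ _ (by simp)
    have hb : b ∈ (colorSubgraph G ecol c).verts :=
      colorSubgraph_verts_iff.mpr ⟨s(a, b), hedge.1, hedge.2, Sym2.mem_mk_right _ _⟩
    have hadj : (colorSubgraph G ecol c).coe.Adj ⟨a, hu⟩ ⟨b, hb⟩ := colorSubgraph_adj_iff.mpr ⟨h, hedge.2⟩
    obtain ⟨q⟩ := ih (fun e he => hQ e (by simp [he])) hb hw
    exact ⟨SimpleGraph.Walk.cons hadj q⟩

lemma build_cycle {v w1 w2 : V} (hvw1 : G.Adj v w1) (hvw2 : G.Adj w2 v) (hne : w1 ≠ w2)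
    {Q : G.Walk w1 w2} (hQp : Q.IsPath) (hvQ : v ∉ Q.support) :
    (SimpleGraph.Walk.cons hvw1
      (Q.append (SimpleGraph.Walk.cons hvw2 SimpleGraph.Walk.nil))).IsCycle := by
  have hvne2 : v ≠ w2 := fun h => hvQ (h ▸ SimpleGraph.Walk.end_mem_support Q)
  have he1 : s(v, w1) ∉ Q.edges := fun h =>
    hvQ (SimpleGraph.Walk.fst_mem_support_of_mem_edges Q h)
  have he2 : s(w2, v) ∉ Q.edges := fun h =>
    hvQ (SimpleGraph.Walk.snd_mem_support_of_mem_edges Q h)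
  have he12 : s(v, w1) ≠ s(w2, v) := by
    intro h
    rw [Sym2.eq_iff] at h
    rcases h with ⟨rfl, rfl⟩ | ⟨-, rfl⟩
    · exact hvne2 rfl
    · exact hne rfl
  rw [SimpleGraph.Walk.isCycle_def]
  refine ⟨⟨?_⟩, by simp, ?_⟩
  · rw [SimpleGraph.Walk.edges_cons, SimpleGraph.Walk.edges_append,
      SimpleGraph.Walk.edges_cons, SimpleGraph.Walk.edges_nil]
    rw [List.nodup_cons]
    constructor
    · intro hmem
      rcases List.mem_append.mp hmem with h1 | h1
      · exact he1 h1
      · rw [List.mem_singleton] at h1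
        exact he12 h1
    · rw [List.nodup_append]
      refine ⟨hQp.edges_nodup, List.nodup_singleton _, ?_⟩
      intro e heQ e' heS heq
      rw [List.mem_singleton] at heS
      exact he2 (by rw [← heS, ← heq]; exact heQ)
  · rw [SimpleGraph.Walk.support_cons, List.tail_cons, SimpleGraph.Walk.support_append,
      SimpleGraph.Walk.support_cons, SimpleGraph.Walk.support_nil, List.tail_cons]
    rw [List.nodup_append]
    refine ⟨hQp.support_nodup, List.nodup_singleton _, ?_⟩
    intro x hxQ x' hxS hxx
    rw [List.mem_singleton] at hxS
    exact hvQ (by rw [← hxS, ← hxx]; exact hxQ)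

lemma all_eq_not_nodup {α : Type*} {l : List α} {a : α} (h : ∀ x ∈ l, x = a)
    (hlen : 2 ≤ l.length) : ¬ l.Nodup := by
  cases l with
  | nil => simp at hlen
  | cons b l2 =>
    cases l2 with
    | nil => simp at hlen
    | cons b2 l3 =>
      intro hnd
      rw [List.nodup_cons] at hnd
      have hb : b = a := h b (by simp)
      have hb2 : b2 = a := h b2 (by simp)
      exact hnd.1 (by rw [hb, hb2]; simp)

end Helpers2

/-- In any extremal TMC-coloring of a connected graph `G`, for every color `c` used on
at least one edge, the subgraph formed by the edges colored `c` is a tree whose internal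
(non-leaf) vertices are all colored `c`. -/
theorem stmt_4 {V : Type*} [Fintype V] (G : SimpleGraph V) (hG : G.Connected)
    (vcol : V → ℕ) (ecol : Sym2 V → ℕ)
    (hf : IsTMCColoring G vcol ecol) (hext : totalColorsUsed G vcol ecol = tmc G)
    (c : ℕ) (hc : ∃ e ∈ G.edgeSet, ecol e = c) :
    (colorSubgraph G ecol c).coe.IsTree ∧
      ∀ v : V, 2 ≤ {w : V | (colorSubgraph G ecol c).Adj v w}.ncard → vcol v = c := by
  classical
  obtain ⟨estar, hesG, hesc⟩ := hc
  by_cases htwo : (∃ e1 e2 : Sym2 V, (e1 ∈ G.edgeSet ∧ ecol e1 = c) ∧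
      (e2 ∈ G.edgeSet ∧ ecol e2 = c) ∧ e1 ≠ e2) ∨ (∃ v, vcol v = c)
  · -- main case
    have hend : ∀ e0, e0 ∈ G.edgeSet → ecol e0 = c → ∃ x ∈ e0, vcol x = c := by
      intro e0 h1 h2
      refine endpoint_colored hf hext h1 h2 ?_
      rcases htwo with ⟨e1, e2, he1, he2, hne⟩ | hv
      · by_cases h : e1 = e0
        · refine Or.inl ⟨e2, he2.1, he2.2, ?_⟩
          intro hh
          exact hne (by rw [h, hh])
        · exact Or.inl ⟨e1, he1.1, he1.2, h⟩
      · exact Or.inr hv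
    obtain ⟨a0, ha0mem, ha0c⟩ := hend estar hesG hesc
    have hreach : ∀ s t, vcol s = c → vcol t = c →
        (HSK G vcol c {e | e ∈ G.edgeSet ∧ ecol e = c}).Reachable s t := by
      intro s t hs ht
      exact ((c_reachable hf hext ha0c) s hs).symm.trans ((c_reachable hf hext ha0c) t ht)
    have hinit : ∀ u, u ∈ (colorSubgraph G ecol c).verts → vcol u ≠ c →
        ∃ z, vcol z = c ∧ G.Adj u z ∧ s(u, z) ∈ {e | e ∈ G.edgeSet ∧ ecol e = c} := by
      intro u hu huc
      obtain ⟨e1, he1G, he1c, hue1⟩ := colorSubgraph_verts_iff.mp hu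
      obtain ⟨z, rfl⟩ := Sym2.mem_iff_exists.mp hue1
      have hzc : vcol z = c := by
        obtain ⟨x, hx, hxc⟩ := hend _ he1G he1c
        rw [Sym2.mem_iff] at hx
        rcases hx with rfl | rfl
        · exact absurd hxc huc
        · exact hxc
      exact ⟨z, hzc, (G.mem_edgeSet).mp he1G, he1G, he1c⟩
    have hnocyc : ∀ (w : V) (CY : G.Walk w w), CY.IsCycle →
        (∀ e ∈ CY.edges, e ∈ G.edgeSet ∧ ecol e = c) → False :=
      fun w CY h1 h2 => no_c_cycle hf hext hend hreach CY h1 h2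
    have hconn : (colorSubgraph G ecol c).coe.Connected := by
      haveI : Nonempty ((colorSubgraph G ecol c).verts) := ⟨⟨a0, colorSubgraph_verts_iff.mpr ⟨estar, hesG, hesc, ha0mem⟩⟩⟩
      refine ⟨?_⟩
      rintro ⟨x, hx⟩ ⟨y, hy⟩
      obtain ⟨P, hPp, hPE, hPint⟩ := path_provider _ hinit hreach hx hy
      obtain ⟨qq⟩ := walk_to_coe P (fun e he => hPE e he) hx hy
      exact ⟨qq⟩
    have hacyc : (colorSubgraph G ecol c).coe.IsAcyclic := by
      intro x CC hCC
      have hCY : (CC.map (colorSubgraph G ecol c).hom).IsCycle :=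
        (SimpleGraph.Walk.map_isCycle_iff_of_injective
          SimpleGraph.Subgraph.hom_injective).mpr hCC
      refine hnocyc _ (CC.map (colorSubgraph G ecol c).hom) hCY ?_
      intro e he
      rw [SimpleGraph.Walk.edges_map] at he
      obtain ⟨e', he', rfl⟩ := List.mem_map.mp he
      have hes := CC.edges_subset_edgeSet he'
      induction e' using Sym2.ind with
      | _ a b =>
        rw [SimpleGraph.mem_edgeSet] at hes
        have h2 : G.Adj a.1 b.1 ∧ ecol s(a.1, b.1) = c :=
          colorSubgraph_adj_iff.mp (show (colorSubgraph G ecol c).Adj a.1 b.1 from hes)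
        constructor
        · simpa using (G.mem_edgeSet).mpr h2.1
        · simpa using h2.2
    refine ⟨⟨hconn, hacyc⟩, ?_⟩
    intro v hv
    by_contra hvc
    obtain ⟨w1, w2, h1, h2, hne⟩ := (Set.one_lt_ncard_iff (Set.toFinite _)).mp hv
    have h1' : G.Adj v w1 ∧ ecol s(v, w1) = c :=
      colorSubgraph_adj_iff.mp (show (colorSubgraph G ecol c).Adj v w1 from h1)
    have h2' : G.Adj v w2 ∧ ecol s(v, w2) = c :=
      colorSubgraph_adj_iff.mp (show (colorSubgraph G ecol c).Adj v w2 from h2)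
    have hw1c : vcol w1 = c := by
      obtain ⟨x, hx, hxc⟩ := hend s(v, w1) ((G.mem_edgeSet).mpr h1'.1) h1'.2
      rw [Sym2.mem_iff] at hx
      rcases hx with rfl | rfl
      · exact absurd hxc hvc
      · exact hxc
    have hw2c : vcol w2 = c := by
      obtain ⟨x, hx, hxc⟩ := hend s(v, w2) ((G.mem_edgeSet).mpr h2'.1) h2'.2
      rw [Sym2.mem_iff] at hx
      rcases hx with rfl | rfl
      · exact absurd hxc hvc
      · exact hxc
    obtain ⟨qq⟩ := hreach w1 w2 hw1c hw2c
    obtain ⟨Q, hQs, hQe⟩ := hsk_toWalk qq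
    have hQ'p : Q.bypass.IsPath := SimpleGraph.Walk.bypass_isPath Q
    have hvQ' : v ∉ Q.bypass.support := by
      intro hmem
      have := SimpleGraph.Walk.support_bypass_subset Q hmem
      rw [hQs] at this
      exact hvc (hsk_support qq hw1c v this)
    have hQ'E : ∀ e ∈ Q.bypass.edges, e ∈ G.edgeSet ∧ ecol e = c := by
      intro e he
      have := SimpleGraph.Walk.edges_bypass_subset Q he
      rw [hQe] at this
      exact hsk_edges qq e this
    have hcyc := build_cycle h1'.1 h2'.1.symm hne hQ'p hvQ'
    refine hnocyc _ _ hcyc ?_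
    intro e he
    rw [SimpleGraph.Walk.edges_cons] at he
    rcases List.mem_cons.mp he with rfl | he
    · exact ⟨(G.mem_edgeSet).mpr h1'.1, h1'.2⟩
    · rw [SimpleGraph.Walk.edges_append] at he
      rcases List.mem_append.mp he with he | he
      · exact hQ'E e he
      · rw [SimpleGraph.Walk.edges_cons, SimpleGraph.Walk.edges_nil] at he
        rw [List.mem_singleton] at he
        subst he
        refine ⟨(G.mem_edgeSet).mpr h2'.1.symm, ?_⟩
        rw [Sym2.eq_swap]
        exact h2'.2
  · -- degenerate case : a single edge of color c and no vertex colored c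
    push_neg at htwo
    obtain ⟨huniq, hnov⟩ := htwo
    have hust : ∀ e, e ∈ G.edgeSet → ecol e = c → e = estar := by
      intro e h1 h2
      exact huniq e estar ⟨h1, h2⟩ ⟨hesG, hesc⟩
    clear huniq hnov
    revert hesG hesc hust
    induction estar using Sym2.ind with
    | _ p q =>
      intro hesG hesc hust
      have hpq : G.Adj p q := (G.mem_edgeSet).mp hesG
      have hnepq : p ≠ q := hpq.ne
      have hverts : ∀ y, y ∈ (colorSubgraph G ecol c).verts ↔ y = p ∨ y = q := by
        intro y
        rw [colorSubgraph_verts_iff]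
        constructor
        · rintro ⟨e, heG, hec, hye⟩
          rw [hust e heG hec] at hye
          rwa [Sym2.mem_iff] at hye
        · rintro (rfl | rfl)
          · exact ⟨s(y, q), hesG, hesc, Sym2.mem_mk_left _ _⟩
          · exact ⟨s(p, y), hesG, hesc, Sym2.mem_mk_right _ _⟩
      have hadj2 : ∀ a b : V,
          (colorSubgraph G ecol c).Adj a b ↔ (a = p ∧ b = q) ∨ (a = q ∧ b = p) := by
        intro a b
        rw [colorSubgraph_adj_iff]
        constructor
        · rintro ⟨hab, hcab⟩
          have heq := hust s(a, b) ((G.mem_edgeSet).mpr hab) hcab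
          rwa [Sym2.eq_iff] at heq
        · rintro (⟨rfl, rfl⟩ | ⟨rfl, rfl⟩)
          · exact ⟨hpq, hesc⟩
          · refine ⟨hpq.symm, ?_⟩
            rw [Sym2.eq_swap]
            exact hesc
      have hPmem : p ∈ (colorSubgraph G ecol c).verts := (hverts p).mpr (Or.inl rfl)
      have hQmem : q ∈ (colorSubgraph G ecol c).verts := (hverts q).mpr (Or.inr rfl)
      have hadjpq : (colorSubgraph G ecol c).coe.Adj ⟨p, hPmem⟩ ⟨q, hQmem⟩ := colorSubgraph_adj_iff.mpr ⟨hpq, hesc⟩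
      have hconn : (colorSubgraph G ecol c).coe.Connected := by
        haveI : Nonempty ((colorSubgraph G ecol c).verts) := ⟨⟨p, hPmem⟩⟩
        refine ⟨?_⟩
        rintro ⟨x, hx⟩ ⟨y, hy⟩
        rcases (hverts x).mp hx with rfl | rfl <;> rcases (hverts y).mp hy with rfl | rfl
        · exact SimpleGraph.Reachable.refl _
        · exact hadjpq.reachable
        · exact hadjpq.symm.reachable
        · exact SimpleGraph.Reachable.refl _
      have hacyc : (colorSubgraph G ecol c).coe.IsAcyclic := by
        intro x CC hCC
        have hall : ∀ e ∈ CC.edges,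
            e = s((⟨p, hPmem⟩ : (colorSubgraph G ecol c).verts), ⟨q, hQmem⟩) := by
          intro e he
          have hes := CC.edges_subset_edgeSet he
          induction e using Sym2.ind with
          | _ a b =>
            rw [SimpleGraph.mem_edgeSet] at hes
            have h2 : (colorSubgraph G ecol c).Adj a.1 b.1 := hes
            rcases (hadj2 a.1 b.1).mp h2 with ⟨h3, h4⟩ | ⟨h3, h4⟩
            · rw [Sym2.eq_iff]
              exact Or.inl ⟨Subtype.ext h3, Subtype.ext h4⟩
            · rw [Sym2.eq_iff]
              exact Or.inr ⟨Subtype.ext h3, Subtype.ext h4⟩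
        have hlen3 := hCC.three_le_length
        rw [SimpleGraph.Walk.isCycle_def] at hCC
        obtain ⟨htr, -, -⟩ := hCC
        refine all_eq_not_nodup hall ?_ htr.edges_nodup
        rw [SimpleGraph.Walk.length_edges]
        omega
      refine ⟨⟨hconn, hacyc⟩, ?_⟩
      intro v hv
      exfalso
      obtain ⟨w1, w2, h1, h2, hne⟩ := (Set.one_lt_ncard_iff (Set.toFinite _)).mp hv
      have h1' := (hadj2 v w1).mp h1
      have h2' := (hadj2 v w2).mp h2
      rcases h1' with ⟨hv1, rfl⟩ | ⟨hv1, rfl⟩ <;> rcases h2' with ⟨hv2, rfl⟩ | ⟨hv2, rfl⟩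
      · exact hne rfl
      · exact hnepq (hv1.symm.trans hv2)
      · exact hnepq (hv2.symm.trans hv1)
      · exact hne rfl
end

section
/- A connected graph G with n vertices and m edges satisfies tmc(G) = m + n if and only if G is a complete graph. -/
open SimpleGraph

/-- A connected graph `G` with `n` vertices and `m` edges satisfies `tmc(G) = m + n`
if and only if `G` is a complete graph. -/
theorem stmt_5 {V : Type*} [Fintype V] (G : SimpleGraph V) (hG : G.Connected) :
    tmc G = G.edgeSet.ncard + Fintype.card V ↔ G = ⊤ := by
  classical
  set m := G.edgeSet.ncard with hm
  set n := Fintype.card V with hn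
  set S := { k | ∃ vcol ecol, IsTMCColoring G vcol ecol ∧ totalColorsUsed G vcol ecol = k }
    with hS
  have hrange : ∀ vcol : V → ℕ, (Set.range vcol).ncard ≤ n := by
    intro vcol
    rw [← Set.image_univ]
    calc (vcol '' Set.univ).ncard ≤ (Set.univ : Set V).ncard :=
          Set.ncard_image_le Set.finite_univ
      _ = n := by rw [Set.ncard_univ, Nat.card_eq_fintype_card]
  have himg : ∀ ecol : Sym2 V → ℕ, (ecol '' G.edgeSet).ncard ≤ m :=
    fun ecol => Set.ncard_image_le G.edgeSet.toFinite
  have hub : ∀ k ∈ S, k ≤ m + n := by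
    rintro k ⟨vcol, ecol, -, rfl⟩
    calc totalColorsUsed G vcol ecol
        ≤ (Set.range vcol).ncard + (ecol '' G.edgeSet).ncard := Set.ncard_union_le _ _
      _ ≤ m + n := by have := hrange vcol; have := himg ecol; omega
  have hbdd : BddAbove S := ⟨m + n, fun k hk => hub k hk⟩
  have hne : S.Nonempty := by
    refine ⟨totalColorsUsed G (fun _ => 0) (fun _ => 0), fun _ => 0, fun _ => 0, ?_, rfl⟩
    intro u v
    obtain ⟨w⟩ := hG u v
    exact ⟨w.toPath, w.toPath.2, 0, fun _ _ => rfl, fun _ _ _ _ => rfl⟩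
  constructor
  · intro htmc
    have hmem : m + n ∈ S := htmc ▸ Nat.sSup_mem hne hbdd
    obtain ⟨vcol, ecol, hTMC, hcount⟩ := hmem
    have hinj : Set.InjOn ecol G.edgeSet := by
      apply Set.injOn_of_ncard_image_eq _ G.edgeSet.toFinite
      have h1 := hrange vcol
      have h2 := himg ecol
      have h3 : totalColorsUsed G vcol ecol ≤ (Set.range vcol).ncard + (ecol '' G.edgeSet).ncard :=
        Set.ncard_union_le _ _
      omega
    ext u v
    simp only [top_adj]
    constructor
    · exact fun h => G.ne_of_adj h
    · intro huv
      obtain ⟨p, hpath, c, hec, -⟩ := hTMC u v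
      cases p with
      | nil => exact absurd rfl huv
      | cons h q =>
        rename_i x
        cases q with
        | nil => exact h
        | cons h' q' =>
          rename_i y
          exfalso
          have hnd := hpath.edges_nodup
          simp only [Walk.edges_cons, List.nodup_cons] at hnd
          have he1 : ecol s(u, x) = c := hec _ (by simp)
          have he2 : ecol s(x, y) = c := hec _ (by simp)
          have : s(u, x) = s(x, y) :=
            hinj (G.mem_edgeSet.2 h) (G.mem_edgeSet.2 h') (he1.trans he2.symm)
          exact hnd.1 (by rw [this]; simp)
  · intro hTop
    subst hTop
    have : Nonempty V := hG.nonempty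
    obtain ⟨f, hf⟩ := exists_injective_nat V
    obtain ⟨g, hg⟩ := exists_injective_nat (Sym2 V)
    set vcol : V → ℕ := fun v => 2 * f v with hvcol
    set ecol : Sym2 V → ℕ := fun e => 2 * g e + 1 with hecol
    have hvinj : Function.Injective vcol := by
      intro a b hab
      simp only [hvcol] at hab
      exact hf (by omega)
    have heinj : Function.Injective ecol := by
      intro a b hab
      simp only [hecol] at hab
      exact hg (by omega)
    have hTMC : IsTMCColoring ⊤ vcol ecol := by
      intro u v
      by_cases huv : u = v
      · subst huv
        exact ⟨Walk.nil, Walk.IsPath.nil, 0, by simp, by simp⟩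
      · have hadj : (⊤ : SimpleGraph V).Adj u v := huv
        refine ⟨Walk.cons hadj Walk.nil, ?_, ecol s(u, v), ?_, ?_⟩
        · simp [Walk.isPath_def, huv]
        · simp
        · intro w hw hwu hwv
          simp only [Walk.support_cons, Walk.support_nil, List.mem_cons,
            List.mem_singleton] at hw
          rcases hw with rfl | rfl | h
          · exact absurd rfl hwu
          · exact absurd rfl hwv
          · exact absurd h List.not_mem_nil
    have hdisj : Disjoint (Set.range vcol) (ecol '' (⊤ : SimpleGraph V).edgeSet) := by
      rw [Set.disjoint_left]
      rintro a ⟨x, rfl⟩ ⟨e, -, he⟩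
      simp only [hvcol, hecol] at he
      omega
    have hcount : totalColorsUsed ⊤ vcol ecol = m + n := by
      rw [totalColorsUsed, Set.ncard_union_eq hdisj (Set.toFinite _) (Set.toFinite _),
        ← Set.image_univ, Set.ncard_image_of_injective _ hvinj,
        Set.ncard_image_of_injective _ heinj, Set.ncard_univ, Nat.card_eq_fintype_card]
      omega
    have hmem : m + n ∈ S := ⟨vcol, ecol, hTMC, hcount⟩
    exact le_antisymm (csSup_le hne hub) (le_csSup hbdd hmem)
end

section
/- Let G be the wheel W_{n−1} of order n ≥ 5 (the graph obtained from a cycle on n−1 vertices by joining one additional vertex to every vertex of the cycle), with m edges. Then tmc(G) = m − n + 2 + l(G). -/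
open SimpleGraph

/-- The wheel `W_k`: the join of a single hub vertex (`none`) with a cycle `C_k`
on the vertices `some 0, …, some (k-1)`. -/
def wheel (k : ℕ) : SimpleGraph (Option (Fin k)) where
  Adj u v :=
    match u, v with
    | none, none => False
    | none, some _ => True
    | some _, none => True
    | some i, some j => i ≠ j ∧ (((i : ℕ) + 1) % k = (j : ℕ) ∨ ((j : ℕ) + 1) % k = (i : ℕ))
  symm := by
    constructor
    rintro (_ | i) (_ | j) h <;> simp_all
    tauto
  loopless := by
    constructor
    rintro (_ | i) h <;> simp_all

section WheelAux

variable {k : ℕ}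

/- ### Fin arithmetic helpers -/

lemma finv1 [NeZero k] (hk : 2 ≤ k) : ((1 : Fin k) : ℕ) = 1 := by
  rw [Fin.val_one']; exact Nat.mod_eq_of_lt (by omega)

lemma finv2 [NeZero k] (hk : 3 ≤ k) : ((1 + 1 : Fin k) : ℕ) = 2 := by
  rw [Fin.add_def, finv1 (by omega)]; exact Nat.mod_eq_of_lt (by omega)

lemma finv3 [NeZero k] (hk : 4 ≤ k) : ((1 + 1 + 1 : Fin k) : ℕ) = 3 := by
  rw [Fin.add_def, finv2 (by omega), finv1 (by omega)]; exact Nat.mod_eq_of_lt (by omega)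

lemma fin_one_ne_zero' [NeZero k] (hk : 2 ≤ k) : (1 : Fin k) ≠ 0 := by
  intro h; have := congrArg Fin.val h; rw [finv1 hk] at this; simp at this

lemma fin_two_ne_zero' [NeZero k] (hk : 3 ≤ k) : (1 + 1 : Fin k) ≠ 0 := by
  intro h; have := congrArg Fin.val h; rw [finv2 hk] at this; simp at this

lemma fin_three_ne_zero' [NeZero k] (hk : 4 ≤ k) : (1 + 1 + 1 : Fin k) ≠ 0 := by
  intro h; have := congrArg Fin.val h; rw [finv3 hk] at this; simp at this

lemma fin_add_one_ne [NeZero k] (hk : 2 ≤ k) (i : Fin k) : i + 1 ≠ i := by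
  intro h; exact fin_one_ne_zero' hk (by rwa [add_eq_left] at h)

lemma fin_add_two_ne [NeZero k] (hk : 3 ≤ k) (i : Fin k) : i + 1 + 1 ≠ i := by
  intro h; rw [add_assoc] at h; exact fin_two_ne_zero' hk (by rwa [add_eq_left] at h)

lemma fin_add_three_ne [NeZero k] (hk : 4 ≤ k) (i : Fin k) : i + 1 + 1 + 1 ≠ i := by
  intro h; rw [add_assoc, add_assoc, ← add_assoc (1 : Fin k)] at h
  exact fin_three_ne_zero' hk (by rwa [add_eq_left] at h)

lemma fin_val_add_one [NeZero k] (hk : 2 ≤ k) (i : Fin k) :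
    ((i + 1 : Fin k) : ℕ) = ((i : ℕ) + 1) % k := by
  rw [Fin.add_def, finv1 hk]

/- ### Wheel adjacency -/

lemma wheel_adj_none_some (i : Fin k) : (wheel k).Adj none (some i) := by
  show True; trivial

lemma wheel_adj_some_none (i : Fin k) : (wheel k).Adj (some i) none := by
  show True; trivial

lemma wheel_adj_some_iff [NeZero k] (hk : 4 ≤ k) {i j : Fin k} :
    (wheel k).Adj (some i) (some j) ↔ j = i + 1 ∨ i = j + 1 := by
  show (i ≠ j ∧ _) ↔ _
  constructor
  · rintro ⟨hne, h | h⟩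
    · left; apply Fin.val_injective; rw [fin_val_add_one (by omega), h]
    · right; apply Fin.val_injective; rw [fin_val_add_one (by omega), h]
  · rintro (rfl | rfl)
    · refine ⟨fun h => fin_add_one_ne (by omega) i h.symm, Or.inl ?_⟩
      rw [← fin_val_add_one (by omega)]
    · refine ⟨fun h => fin_add_one_ne (by omega) j h, Or.inr ?_⟩
      rw [← fin_val_add_one (by omega)]

lemma wheel_not_adj [NeZero k] (hk : 4 ≤ k) (i : Fin k) :
    ¬ (wheel k).Adj (some i) (some (i + 1 + 1)) := by
  rw [wheel_adj_some_iff hk]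
  rintro (h | h)
  · exact fin_add_one_ne (by omega) i (add_right_cancel h)
  · exact fin_add_three_ne hk i h.symm

lemma wheel_ne_two [NeZero k] (hk : 4 ≤ k) (i : Fin k) :
    (some i : Option (Fin k)) ≠ some (i + 1 + 1) := by
  intro h
  exact fin_add_two_ne (by omega) i (Option.some_injective _ h).symm

/- ### spokes and cycle edges -/

def spk (k : ℕ) (i : Fin k) : Sym2 (Option (Fin k)) := s(none, some i)

def cyc (k : ℕ) [NeZero k] (i : Fin k) : Sym2 (Option (Fin k)) := s(some i, some (i + 1))

lemma spk_mem_edgeSet (i : Fin k) : spk k i ∈ (wheel k).edgeSet :=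
  wheel_adj_none_some i

lemma cyc_mem_edgeSet [NeZero k] (hk : 4 ≤ k) (i : Fin k) : cyc k i ∈ (wheel k).edgeSet := by
  rw [cyc, SimpleGraph.mem_edgeSet, wheel_adj_some_iff hk]
  exact Or.inl rfl

lemma spk_injective : Function.Injective (spk k) := by
  intro i j h
  rw [spk, spk, Sym2.eq_iff] at h
  rcases h with ⟨-, h⟩ | ⟨h, -⟩ <;> simp_all

lemma cyc_injective [NeZero k] (hk : 4 ≤ k) : Function.Injective (cyc k) := by
  intro i j h
  rw [cyc, cyc, Sym2.eq_iff] at h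
  rcases h with ⟨h1, -⟩ | ⟨h1, h2⟩
  · exact Option.some_injective _ h1
  · exfalso
    have h1' : i = j + 1 := Option.some_injective _ h1
    have h2' : i + 1 = j := Option.some_injective _ h2
    rw [← h2'] at h1'
    exact fin_add_two_ne (by omega) i h1'.symm

lemma spk_ne_cyc [NeZero k] (i j : Fin k) : spk k i ≠ cyc k j := by
  rw [spk, cyc, Ne, Sym2.eq_iff]
  rintro (⟨h, -⟩ | ⟨h, -⟩) <;> simp at h

lemma wheel_edgeSet_eq [NeZero k] (hk : 4 ≤ k) :
    (wheel k).edgeSet = spk k '' Set.univ ∪ cyc k '' Set.univ := by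
  apply Set.eq_of_subset_of_subset
  · intro e
    induction e using Sym2.ind with
    | _ u v =>
      intro he
      rw [SimpleGraph.mem_edgeSet] at he
      match u, v with
      | none, none => exact he.elim
      | none, some j => exact Or.inl ⟨j, trivial, rfl⟩
      | some i, none =>
        refine Or.inl ⟨i, trivial, ?_⟩
        rw [spk, Sym2.eq_swap]
      | some i, some j =>
        rw [wheel_adj_some_iff hk] at he
        rcases he with rfl | rfl
        · exact Or.inr ⟨i, trivial, rfl⟩
        · refine Or.inr ⟨j, trivial, ?_⟩
          rw [cyc, Sym2.eq_swap]
  · rintro e (⟨i, -, rfl⟩ | ⟨i, -, rfl⟩)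
    · exact spk_mem_edgeSet i
    · exact cyc_mem_edgeSet hk i

lemma wheel_edgeSet_ncard [NeZero k] (hk : 4 ≤ k) : (wheel k).edgeSet.ncard = 2 * k := by
  rw [wheel_edgeSet_eq hk, Set.ncard_union_eq, Set.ncard_image_of_injective _ spk_injective,
    Set.ncard_image_of_injective _ (cyc_injective hk), Set.ncard_univ, Nat.card_eq_fintype_card,
    Fintype.card_fin]
  · ring
  · rw [Set.disjoint_left]
    rintro e ⟨i, -, rfl⟩ ⟨j, -, hj⟩
    exact spk_ne_cyc i j hj.symm

/- ### extraction from a TMC coloring -/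

lemma exists_second_vertex {V : Type*} {G : SimpleGraph V} {vcol : V → ℕ} {ecol : Sym2 V → ℕ}
    (h : IsTMCColoring G vcol ecol) {u v : V}
    (hne : u ≠ v) (hnadj : ¬ G.Adj u v) :
    ∃ b : V, G.Adj u b ∧ ecol s(u, b) = vcol b := by
  obtain ⟨p, hp, c, hec, hvc⟩ := h u v
  cases p with
  | nil => exact absurd rfl hne
  | cons hadj q =>
    rename_i b
    cases q with
    | nil => exact absurd hadj hnadj
    | cons hadj2 r =>
      refine ⟨b, hadj, ?_⟩
      have hb_mem : b ∈ (Walk.cons hadj (Walk.cons hadj2 r)).support := by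
        simp [Walk.support_cons]
      have hbu : b ≠ u := by
        rintro rfl
        have := (Walk.cons_isPath_iff hadj _).mp hp
        exact this.2 (Walk.start_mem_support _)
      have hbv : b ≠ v := by
        rintro rfl
        have hq : (Walk.cons hadj2 r).IsPath := ((Walk.cons_isPath_iff hadj _).mp hp).1
        have hq2 := SimpleGraph.Walk.isPath_iff_eq_nil.mp hq
        simp at hq2
      have he : ecol s(u, b) = c := hec _ (by simp [Walk.edges_cons])
      have hv : vcol b = c := hvc b hb_mem hbu hbv
      rw [he, hv]

lemma wheel_extract [NeZero k] (hk : 4 ≤ k) {vcol : Option (Fin k) → ℕ}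
    {ecol : Sym2 (Option (Fin k)) → ℕ} (h : IsTMCColoring (wheel k) vcol ecol) (i : Fin k) :
    ecol (spk k i) = vcol none ∨ ecol (cyc k i) = vcol (some (i + 1)) ∨
      ecol (cyc k (i - 1)) = vcol (some (i - 1)) := by
  obtain ⟨b, hadj, heq⟩ := exists_second_vertex h (wheel_ne_two hk i) (wheel_not_adj hk i)
  match b with
  | none =>
    left
    rw [spk, Sym2.eq_swap]
    exact heq
  | some j =>
    rw [wheel_adj_some_iff hk] at hadj
    rcases hadj with rfl | hj
    · right; left
      exact heq
    · right; right
      have hji : j = i - 1 := by rw [hj, add_sub_cancel_right]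
      subst hji
      have hcyc : cyc k (i - 1) = s(some i, some (i - 1)) := by
        rw [cyc, sub_add_cancel, Sym2.eq_swap]
      rw [hcyc]
      exact heq

/- ### the upper bound -/

lemma wheel_tcu_le [NeZero k] (hk : 4 ≤ k) {vcol : Option (Fin k) → ℕ}
    {ecol : Sym2 (Option (Fin k)) → ℕ} (h : IsTMCColoring (wheel k) vcol ecol) :
    totalColorsUsed (wheel k) vcol ecol ≤ 2 * k + 1 := by
  classical
  set pa : Fin k → Prop := fun i => ecol (spk k i) = vcol none with hpa_def
  set pb : Fin k → Prop := fun i => ¬ pa i ∧ ecol (cyc k i) = vcol (some (i + 1)) with hpb_def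
  set pc : Fin k → Prop := fun i => ¬ pa i ∧ ¬ ecol (cyc k i) = vcol (some (i + 1)) with hpc_def
  have keyC : ∀ i, pc i → ecol (cyc k (i - 1)) = vcol (some (i - 1)) := by
    intro i hci
    rcases wheel_extract hk h i with h1 | h2 | h3
    · exact absurd h1 hci.1
    · exact absurd h2 hci.2
    · exact h3
  have keyC' : ∀ i, pc (i + 1) → ecol (cyc k i) = vcol (some i) := by
    intro i hci
    have := keyC _ hci
    rwa [add_sub_cancel_right] at this
  set SA : Set (Sym2 (Option (Fin k))) := spk k '' {i | pa i} with hSA_def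
  set SB : Set (Sym2 (Option (Fin k))) := cyc k '' {i | pb i} with hSB_def
  set SCv : Set (Option (Fin k)) := (fun i : Fin k => (some (i - 1) : Option (Fin k))) '' {i | pc i}
    with hSCv_def
  have hvSCv : ∀ j : Fin k, (some j : Option (Fin k)) ∈ SCv ↔ pc (j + 1) := by
    intro j
    constructor
    · rintro ⟨i, hci, hij⟩
      have : i - 1 = j := Option.some_injective _ hij
      have hij' : i = j + 1 := by rw [← this, sub_add_cancel]
      rwa [hij'] at hci
    · intro hc
      exact ⟨j + 1, hc, by show some (j + 1 - 1) = some j; rw [add_sub_cancel_right]⟩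
  have hnoneSCv : (none : Option (Fin k)) ∉ SCv := by
    rintro ⟨i, -, hij⟩
    exact Option.some_ne_none _ hij
  have hcycSB : ∀ m : Fin k, cyc k m ∈ SB ↔ pb m := by
    intro m
    constructor
    · rintro ⟨i, hbi, him⟩
      rwa [cyc_injective hk him] at hbi
    · intro hb; exact ⟨m, hb, rfl⟩
  have hcycSA : ∀ m : Fin k, cyc k m ∉ SA := by
    rintro m ⟨i, -, him⟩
    exact spk_ne_cyc i m him
  set Tgt : Set ℕ := vcol '' (Set.univ \ SCv) ∪ ecol '' ((wheel k).edgeSet \ (SA ∪ SB)) with hTgt_def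
  have hgoalB : ∀ i, pb i → ecol (cyc k i) ∈ Tgt := by
    intro i hbi
    by_cases hc : pc (i + 1 + 1)
    · have h2 : ecol (cyc k (i + 1)) = vcol (some (i + 1)) := keyC' _ hc
      by_cases hb2 : pb (i + 1)
      · have h3 : ecol (cyc k (i + 1)) = vcol (some (i + 1 + 1)) := hb2.2
        by_cases hc3 : pc (i + 1 + 1 + 1)
        · have h4 : ecol (cyc k (i + 1 + 1)) = vcol (some (i + 1 + 1)) := keyC' _ hc3
          refine Or.inr ⟨cyc k (i + 1 + 1), ⟨cyc_mem_edgeSet hk _, ?_⟩, ?_⟩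
          · rintro (hmem | hmem)
            · exact hcycSA _ hmem
            · exact hc.2 ((hcycSB _).mp hmem).2
          · rw [h4, ← h3, h2, ← hbi.2]
        · refine Or.inl ⟨some (i + 1 + 1), ⟨trivial, ?_⟩, ?_⟩
          · intro hmem; exact hc3 ((hvSCv _).mp hmem)
          · rw [← h3, h2, ← hbi.2]
      · refine Or.inr ⟨cyc k (i + 1), ⟨cyc_mem_edgeSet hk _, ?_⟩, ?_⟩
        · rintro (hmem | hmem)
          · exact hcycSA _ hmem
          · exact hb2 ((hcycSB _).mp hmem)
        · rw [h2, ← hbi.2]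
    · refine Or.inl ⟨some (i + 1), ⟨trivial, ?_⟩, ?_⟩
      · intro hmem; exact hc ((hvSCv _).mp hmem)
      · exact hbi.2.symm
  have hgoalC : ∀ i, pc i → vcol (some (i - 1)) ∈ Tgt := by
    intro i hci
    have h1 : ecol (cyc k (i - 1)) = vcol (some (i - 1)) := keyC i hci
    by_cases hb : pb (i - 1)
    · have h2 : ecol (cyc k (i - 1)) = vcol (some i) := by
        have := hb.2
        rwa [sub_add_cancel] at this
      by_cases hc2 : pc (i + 1)
      · have h3 : ecol (cyc k i) = vcol (some i) := keyC' _ hc2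
        refine Or.inr ⟨cyc k i, ⟨cyc_mem_edgeSet hk _, ?_⟩, ?_⟩
        · rintro (hmem | hmem)
          · exact hcycSA _ hmem
          · exact hci.2 ((hcycSB _).mp hmem).2
        · rw [h3, ← h2, h1]
      · refine Or.inl ⟨some i, ⟨trivial, ?_⟩, ?_⟩
        · intro hmem; exact hc2 ((hvSCv _).mp hmem)
        · rw [← h2, h1]
    · refine Or.inr ⟨cyc k (i - 1), ⟨cyc_mem_edgeSet hk _, ?_⟩, ?_⟩
      · rintro (hmem | hmem)
        · exact hcycSA _ hmem
        · exact hb ((hcycSB _).mp hmem)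
      · exact h1
  have hsub : Set.range vcol ∪ ecol '' (wheel k).edgeSet ⊆ Tgt := by
    rintro x (⟨v, rfl⟩ | ⟨e, he, rfl⟩)
    · by_cases hv : v ∈ SCv
      · obtain ⟨i, hci, rfl⟩ := hv
        exact hgoalC i hci
      · exact Or.inl ⟨v, ⟨trivial, hv⟩, rfl⟩
    · by_cases hee : e ∈ SA ∪ SB
      · rcases hee with ⟨i, hai, rfl⟩ | ⟨i, hbi, rfl⟩
        · exact Or.inl ⟨none, ⟨trivial, hnoneSCv⟩, hai.symm⟩
        · exact hgoalB i hbi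
      · exact Or.inr ⟨e, ⟨he, hee⟩, rfl⟩
  -- cardinalities
  have hSCv_card : SCv.ncard = {i | pc i}.ncard := by
    apply Set.ncard_image_of_injective
    intro a b hab
    have : a - 1 = b - 1 := Option.some_injective _ hab
    have := congrArg (· + 1) this
    simpa [sub_add_cancel] using this
  have hSA_card : SA.ncard = {i | pa i}.ncard := Set.ncard_image_of_injective _ spk_injective
  have hSB_card : SB.ncard = {i | pb i}.ncard := Set.ncard_image_of_injective _ (cyc_injective hk)
  have habc : {i : Fin k | pa i}.ncard + {i : Fin k | pb i}.ncard + {i : Fin k | pc i}.ncard = k := by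
    have hU : {i : Fin k | pa i} ∪ ({i : Fin k | pb i} ∪ {i : Fin k | pc i}) = Set.univ := by
      ext i
      simp only [Set.mem_union, Set.mem_setOf_eq, Set.mem_univ, iff_true]
      by_cases h1 : pa i
      · exact Or.inl h1
      · by_cases h2 : ecol (cyc k i) = vcol (some (i + 1))
        · exact Or.inr (Or.inl ⟨h1, h2⟩)
        · exact Or.inr (Or.inr ⟨h1, h2⟩)
    have hd1 : Disjoint {i : Fin k | pb i} {i : Fin k | pc i} := by
      rw [Set.disjoint_left]
      rintro i hb hc
      exact hc.2 hb.2
    have hd2 : Disjoint {i : Fin k | pa i} ({i : Fin k | pb i} ∪ {i : Fin k | pc i}) := by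
      rw [Set.disjoint_left]
      rintro i ha (hb | hc)
      · exact hb.1 ha
      · exact hc.1 ha
    have := congrArg Set.ncard hU
    rw [Set.ncard_union_eq hd2, Set.ncard_union_eq hd1, Set.ncard_univ,
      Nat.card_eq_fintype_card, Fintype.card_fin] at this
    omega
  have hVcard : (Set.univ : Set (Option (Fin k))).ncard = k + 1 := by
    rw [Set.ncard_univ, Nat.card_eq_fintype_card, Fintype.card_option, Fintype.card_fin]
  have hdiff1 : (Set.univ \ SCv).ncard = (k + 1) - SCv.ncard := by
    rw [Set.ncard_diff (Set.subset_univ _), hVcard]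
  have hsub2 : SA ∪ SB ⊆ (wheel k).edgeSet := by
    rintro e (⟨i, -, rfl⟩ | ⟨i, -, rfl⟩)
    · exact spk_mem_edgeSet i
    · exact cyc_mem_edgeSet hk i
  have hdAB : Disjoint SA SB := by
    rw [Set.disjoint_left]
    rintro e ⟨i, -, rfl⟩ ⟨j, -, hj⟩
    exact spk_ne_cyc i j hj.symm
  have hdiff2 : ((wheel k).edgeSet \ (SA ∪ SB)).ncard = 2 * k - (SA.ncard + SB.ncard) := by
    rw [Set.ncard_diff hsub2, wheel_edgeSet_ncard hk, Set.ncard_union_eq hdAB]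
  have hmain : totalColorsUsed (wheel k) vcol ecol ≤ Tgt.ncard := by
    rw [totalColorsUsed]
    exact Set.ncard_le_ncard hsub (Set.Finite.union
      ((Set.toFinite _).image _) ((Set.toFinite _).image _))
  have hTgt_le : Tgt.ncard ≤ (Set.univ \ SCv).ncard + ((wheel k).edgeSet \ (SA ∪ SB)).ncard :=
    le_trans (Set.ncard_union_le _ _)
      (by gcongr <;> exact Set.ncard_image_le (Set.toFinite _))
  have hsc_le : {i : Fin k | pc i}.ncard ≤ k := by omega
  omega

/- ### the lower bound: an explicit TMC coloring -/

noncomputable def myvcol (k : ℕ) : Option (Fin k) → ℕ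
  | none => 0
  | some i => (i : ℕ) + 1

noncomputable def myecolfun (k : ℕ) [NeZero k] : Option (Fin k) → Option (Fin k) → ℕ
  | none, _ => 0
  | _, none => 0
  | some i, some j => if j = i + 1 then k + 1 + (i : ℕ) else if i = j + 1 then k + 1 + (j : ℕ) else 0

lemma myecolfun_symm [NeZero k] (hk : 4 ≤ k) (a b : Option (Fin k)) :
    myecolfun k a b = myecolfun k b a := by
  match a, b with
  | none, none => rfl
  | none, some j => rfl
  | some i, none => rfl
  | some i, some j =>
    show (if j = i + 1 then k + 1 + (i : ℕ) else if i = j + 1 then k + 1 + (j : ℕ) else 0)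
      = (if i = j + 1 then k + 1 + (j : ℕ) else if j = i + 1 then k + 1 + (i : ℕ) else 0)
    split_ifs with h1 h2 h2
    · exfalso
      rw [h2] at h1
      exact fin_add_two_ne (by omega) j h1.symm
    · rfl
    · rfl
    · rfl

noncomputable def myecol (k : ℕ) [NeZero k] (hk : 4 ≤ k) : Sym2 (Option (Fin k)) → ℕ :=
  Sym2.lift ⟨myecolfun k, myecolfun_symm hk⟩

lemma myecol_eval [NeZero k] (hk : 4 ≤ k) (a b : Option (Fin k)) :
    myecol k hk s(a, b) = myecolfun k a b := rfl

lemma my_isTMC [NeZero k] (hk : 4 ≤ k) : IsTMCColoring (wheel k) (myvcol k) (myecol k hk) := by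
  have hspoke : ∀ b : Option (Fin k), myecol k hk s(none, b) = 0 := by
    intro b; rw [myecol_eval]; cases b <;> rfl
  have hspoke' : ∀ b : Option (Fin k), myecol k hk s(b, none) = 0 := by
    intro b; rw [myecol_eval, myecolfun_symm hk]; cases b <;> rfl
  intro u v
  match u, v with
  | none, none =>
    refine ⟨Walk.nil, Walk.IsPath.nil, 0, by simp, ?_⟩
    intro w hw hwu hwv
    simp only [Walk.support_nil, List.mem_singleton] at hw
    exact absurd hw hwu
  | none, some j =>
    refine ⟨Walk.cons (wheel_adj_none_some j) Walk.nil, ?_, 0, ?_, ?_⟩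
    · simp [Walk.cons_isPath_iff]
    · intro e he
      simp only [Walk.edges_cons, Walk.edges_nil, List.mem_singleton] at he
      rw [he]; exact hspoke _
    · intro w hw hwu hwv
      simp only [Walk.support_cons, Walk.support_nil, List.mem_cons, List.mem_singleton,
        List.not_mem_nil, or_false] at hw
      rcases hw with rfl | rfl
      · exact absurd rfl hwu
      · exact absurd rfl hwv
  | some i, none =>
    refine ⟨Walk.cons (wheel_adj_some_none i) Walk.nil, ?_, 0, ?_, ?_⟩
    · simp [Walk.cons_isPath_iff]
    · intro e he
      simp only [Walk.edges_cons, Walk.edges_nil, List.mem_singleton] at he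
      rw [he]; exact hspoke' _
    · intro w hw hwu hwv
      simp only [Walk.support_cons, Walk.support_nil, List.mem_cons, List.mem_singleton,
        List.not_mem_nil, or_false] at hw
      rcases hw with rfl | rfl
      · exact absurd rfl hwu
      · exact absurd rfl hwv
  | some i, some j =>
    by_cases hij : i = j
    · subst hij
      refine ⟨Walk.nil, Walk.IsPath.nil, 0, by simp, ?_⟩
      intro w hw hwu hwv
      simp only [Walk.support_nil, List.mem_singleton] at hw
      exact absurd hw hwu
    · refine ⟨Walk.cons (wheel_adj_some_none i) (Walk.cons (wheel_adj_none_some j) Walk.nil),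
        ?_, 0, ?_, ?_⟩
      · simp [Walk.cons_isPath_iff, hij]
      · intro e he
        simp only [Walk.edges_cons, Walk.edges_nil, List.mem_cons, List.mem_singleton,
          List.not_mem_nil, or_false] at he
        rcases he with rfl | rfl
        · exact hspoke' _
        · exact hspoke _
      · intro w hw hwu hwv
        simp only [Walk.support_cons, Walk.support_nil, List.mem_cons, List.mem_singleton,
          List.not_mem_nil, or_false] at hw
        rcases hw with rfl | rfl | rfl
        · exact absurd rfl hwu
        · rfl
        · exact absurd rfl hwv

lemma my_colors [NeZero k] (hk : 4 ≤ k) :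
    Set.range (myvcol k) ∪ myecol k hk '' (wheel k).edgeSet = Set.Iio (2 * k + 1) := by
  apply Set.eq_of_subset_of_subset
  · rintro x (⟨v, rfl⟩ | ⟨e, he, rfl⟩)
    · match v with
      | none => simp only [myvcol, Set.mem_Iio]; omega
      | some i =>
        have : (i : ℕ) < k := i.2
        simp only [myvcol, Set.mem_Iio]
        omega
    · rw [wheel_edgeSet_eq hk] at he
      rcases he with ⟨i, -, rfl⟩ | ⟨i, -, rfl⟩
      · rw [spk, myecol_eval]
        show (0 : ℕ) ∈ Set.Iio (2 * k + 1)
        simp only [Set.mem_Iio]; omega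
      · rw [cyc, myecol_eval]
        show (if i + 1 = i + 1 then k + 1 + (i : ℕ) else _) ∈ Set.Iio (2 * k + 1)
        rw [if_pos rfl]
        have : (i : ℕ) < k := i.2
        simp only [Set.mem_Iio]; omega
  · intro c hc
    simp only [Set.mem_Iio] at hc
    rcases Nat.lt_or_ge c (k + 1) with hck | hck
    · left
      rcases Nat.eq_zero_or_pos c with rfl | hcpos
      · exact ⟨none, rfl⟩
      · refine ⟨some ⟨c - 1, by omega⟩, ?_⟩
        show (c - 1) + 1 = c
        omega
    · right
      refine ⟨cyc k ⟨c - (k + 1), by omega⟩, cyc_mem_edgeSet hk _, ?_⟩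
      rw [cyc, myecol_eval]
      show (if _ = _ + 1 then k + 1 + (c - (k+1)) else _) = c
      rw [if_pos rfl]
      omega

lemma my_tcu [NeZero k] (hk : 4 ≤ k) :
    totalColorsUsed (wheel k) (myvcol k) (myecol k hk) = 2 * k + 1 := by
  rw [totalColorsUsed, my_colors hk, ← Finset.coe_range, Set.ncard_coe_finset, Finset.card_range]

/- ### tmc of the wheel -/

lemma tmc_wheel [NeZero k] (hk : 4 ≤ k) : tmc (wheel k) = 2 * k + 1 := by
  have hmem : (2 * k + 1) ∈
      { m | ∃ vcol ecol, IsTMCColoring (wheel k) vcol ecol ∧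
          totalColorsUsed (wheel k) vcol ecol = m } :=
    ⟨myvcol k, myecol k hk, my_isTMC hk, my_tcu hk⟩
  have hub : ∀ m ∈ { m | ∃ vcol ecol, IsTMCColoring (wheel k) vcol ecol ∧
      totalColorsUsed (wheel k) vcol ecol = m }, m ≤ 2 * k + 1 := by
    rintro m ⟨vcol, ecol, hcol, rfl⟩
    exact wheel_tcu_le hk hcol
  exact le_antisymm (csSup_le ⟨_, hmem⟩ hub) (le_csSup ⟨2 * k + 1, hub⟩ hmem)

/- ### maxLeaves of the wheel -/

def starG (k : ℕ) : SimpleGraph (Option (Fin k)) where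
  Adj u v := (u = none ∧ v ≠ none) ∨ (v = none ∧ u ≠ none)
  symm := by constructor; rintro u v (⟨rfl, h⟩ | ⟨rfl, h⟩) <;> tauto
  loopless := by constructor; rintro u (⟨rfl, h⟩ | ⟨rfl, h⟩) <;> exact h rfl

lemma starG_le : starG k ≤ wheel k := by
  rintro u v (⟨rfl, hv⟩ | ⟨rfl, hu⟩)
  · obtain ⟨j, rfl⟩ := Option.ne_none_iff_exists'.mp hv
    exact wheel_adj_none_some j
  · obtain ⟨j, rfl⟩ := Option.ne_none_iff_exists'.mp hu
    exact wheel_adj_some_none j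

lemma starG_adj_none_some (j : Fin k) : (starG k).Adj none (some j) :=
  Or.inl ⟨rfl, by simp⟩

lemma starG_connected : (starG k).Connected := by
  rw [connected_iff]
  refine ⟨?_, ⟨none⟩⟩
  intro u v
  match u, v with
  | none, none => exact Reachable.refl _
  | none, some j => exact (starG_adj_none_some j).reachable
  | some i, none => exact (starG_adj_none_some i).symm.reachable
  | some i, some j =>
    exact ((starG_adj_none_some i).symm.reachable).trans (starG_adj_none_some j).reachable

lemma starG_acyclic : (starG k).IsAcyclic := by
  intro v c hc
  rw [SimpleGraph.Walk.isCycle_def] at hc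
  obtain ⟨htrail, hnnil, hnodup⟩ := hc
  cases c with
  | nil => exact hnnil rfl
  | cons h1 q =>
    rename_i b
    cases q with
    | nil => exact (starG k).loopless.irrefl v h1
    | cons h2 r =>
      rename_i b2
      cases r with
      | nil =>
        -- two-edge closed walk: duplicate edge
        rw [SimpleGraph.Walk.isTrail_def] at htrail
        simp only [Walk.edges_cons, Walk.edges_nil, List.nodup_cons, List.mem_cons,
          List.mem_singleton, List.not_mem_nil, or_false, List.nodup_nil, and_true] at htrail
        exact htrail.1 (Sym2.eq_swap)
      | cons h3 r' =>
        rename_i b3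
        -- support tail = b :: b2 :: r'.support contains `none` twice
        simp only [Walk.support_cons, List.tail_cons, List.nodup_cons] at hnodup
        by_cases hb : b = none
        · subst hb
          have hb2ne : b2 ≠ none := by
            rcases h2 with ⟨-, h⟩ | ⟨-, h⟩
            · exact h
            · exact absurd rfl h
          have hb3 : b3 = none := by
            rcases h3 with ⟨h, -⟩ | ⟨h, -⟩
            · exact absurd h hb2ne
            · exact h
          exfalso
          apply hnodup.1
          right
          rw [← hb3]
          exact Walk.start_mem_support r'
        · -- b ≠ none forces v = none and b2 = none
          have hb2 : b2 = none := by
            rcases h2 with ⟨h, -⟩ | ⟨h, -⟩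
            · exact absurd h hb
            · exact h
          have hv : v = none := by
            rcases h1 with ⟨h, -⟩ | ⟨h, -⟩
            · exact h
            · exact absurd h hb
          exfalso
          apply hnodup.2.1
          rw [hb2, ← hv]
          exact Walk.end_mem_support r'

lemma starG_isTree : (starG k).IsTree := ⟨starG_connected, starG_acyclic⟩

lemma starG_neighborSet_some (i : Fin k) : (starG k).neighborSet (some i) = {none} := by
  ext x
  simp only [mem_neighborSet, Set.mem_singleton_iff]
  constructor
  · rintro (⟨h, -⟩ | ⟨h, -⟩)
    · simp at h
    · exact h
  · rintro rfl
    exact (starG_adj_none_some i).symm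

lemma starG_neighborSet_none : (starG k).neighborSet (none : Option (Fin k)) =
    Option.some '' Set.univ := by
  ext x
  simp only [mem_neighborSet, Set.mem_image, Set.mem_univ, true_and]
  constructor
  · rintro (⟨-, h⟩ | ⟨-, h⟩)
    · obtain ⟨j, rfl⟩ := Option.ne_none_iff_exists'.mp h
      exact ⟨j, rfl⟩
    · exact absurd rfl h
  · rintro ⟨j, rfl⟩
    exact starG_adj_none_some j

lemma starG_leafCount (hk : 4 ≤ k) : leafCount (starG k) = k := by
  have hset : {v : Option (Fin k) | ((starG k).neighborSet v).ncard = 1} =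
      Option.some '' Set.univ := by
    ext v
    simp only [Set.mem_setOf_eq, Set.mem_image, Set.mem_univ, true_and]
    constructor
    · intro hv
      match v with
      | some i => exact ⟨i, rfl⟩
      | none =>
        exfalso
        rw [starG_neighborSet_none, Set.ncard_image_of_injective _ (Option.some_injective _),
          Set.ncard_univ, Nat.card_eq_fintype_card, Fintype.card_fin] at hv
        omega
    · rintro ⟨i, rfl⟩
      rw [starG_neighborSet_some i, Set.ncard_singleton]
  rw [leafCount, hset, Set.ncard_image_of_injective _ (Option.some_injective _),
    Set.ncard_univ, Nat.card_eq_fintype_card, Fintype.card_fin]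

lemma tree_leafCount_le (hk : 4 ≤ k) {T : SimpleGraph (Option (Fin k))} (hT : T.IsTree) :
    leafCount T ≤ k := by
  classical
  have hedge : T.edgeFinset.card + 1 = Fintype.card (Option (Fin k)) := hT.card_edgeFinset
  rw [Fintype.card_option, Fintype.card_fin] at hedge
  have hsum : ∑ v, T.degree v = 2 * T.edgeFinset.card := T.sum_degrees_eq_twice_card_edges
  have hdeg : ∀ v, (T.neighborSet v).ncard = T.degree v := by
    intro v
    rw [← Nat.card_coe_set_eq, Nat.card_eq_fintype_card, card_neighborSet_eq_degree]
  have hex : ∃ v₀ : Option (Fin k), (T.neighborSet v₀).ncard ≠ 1 := by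
    by_contra hall
    push_neg at hall
    have hs1 : ∑ v, T.degree v = ∑ _v : Option (Fin k), 1 :=
      Finset.sum_congr rfl (fun v _ => by rw [← hdeg v, hall v])
    rw [Finset.sum_const, smul_eq_mul, mul_one, Finset.card_univ, Fintype.card_option,
      Fintype.card_fin] at hs1
    omega
  obtain ⟨v₀, hv₀⟩ := hex
  have hsubset : {v : Option (Fin k) | (T.neighborSet v).ncard = 1} ⊆ Set.univ \ {v₀} := by
    intro v hv
    exact ⟨trivial, fun h => hv₀ (h ▸ hv)⟩
  have hle : leafCount T ≤ (Set.univ \ {v₀} : Set (Option (Fin k))).ncard :=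
    Set.ncard_le_ncard hsubset (Set.toFinite _)
  have heq : (Set.univ \ {v₀} : Set (Option (Fin k))).ncard = k := by
    rw [Set.ncard_diff (Set.subset_univ _), Set.ncard_singleton, Set.ncard_univ,
      Nat.card_eq_fintype_card, Fintype.card_option, Fintype.card_fin]
    omega
  omega

lemma maxLeaves_wheel [NeZero k] (hk : 4 ≤ k) : maxLeaves (wheel k) = k := by
  have hmem : k ∈ { m | ∃ T : SimpleGraph (Option (Fin k)), T ≤ wheel k ∧ T.IsTree ∧
      leafCount T = m } := ⟨starG k, starG_le, starG_isTree, starG_leafCount hk⟩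
  have hub : ∀ m ∈ { m | ∃ T : SimpleGraph (Option (Fin k)), T ≤ wheel k ∧ T.IsTree ∧
      leafCount T = m }, m ≤ k := by
    rintro m ⟨T, -, hT, rfl⟩
    exact tree_leafCount_le hk hT
  exact le_antisymm (csSup_le ⟨_, hmem⟩ hub) (le_csSup ⟨k, hub⟩ hmem)

end WheelAux

/-- For the wheel `G = W_{n-1}` of order `n ≥ 5`, `tmc(G) = m - n + 2 + l(G)`. -/
theorem stmt_6 (n : ℕ) (hn : 5 ≤ n) :
    (tmc (wheel (n - 1)) : ℤ) =
      ((wheel (n - 1)).edgeSet.ncard : ℤ) - n + 2 + maxLeaves (wheel (n - 1)) := by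
  haveI : NeZero (n - 1) := ⟨by omega⟩
  have hk : 4 ≤ n - 1 := by omega
  rw [tmc_wheel hk, wheel_edgeSet_ncard hk, maxLeaves_wheel hk]
  push_cast [Nat.cast_sub (by omega : 1 ≤ n)]
  omega
end
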